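/- arXiv:2307.00585 — 5 statements merged into one kernel-verified Lean document; each statement's English description precedes it below -/
import Mathlib

section
/- Assume hypothesis (B1) and α ≥ p − 1. Then for every R > 0 there is no non-constant positive radial solution on B_R of the system Δ_p u = f₁(|x|)·g₁(v)·|∇u|^α, Δ_p v = f₂(|x|)·g₂(v)·g₃(|∇u|). -/
open Set Filter Topology

noncomputable section

/-- Hypothesis (B1) for a single function: continuous, non-decreasing on `[0,∞)`,
positive on `(0,∞)`. -/
def B1cond (f : ℝ → ℝ) : Prop :=
  ContinuousOn f (Set.Ici 0) ∧ MonotoneOn f (Set.Ici 0) ∧ ∀ t : ℝ, 0 < t → 0 < f t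

/-- `w` is not a constant function on `[0,R)`. -/
def NonConstOn (R : EReal) (w : ℝ → ℝ) : Prop :=
  ¬ ∃ c : ℝ, ∀ r : ℝ, 0 ≤ r → (r : EReal) < R → w r = c

/-- A positive radial solution on `B_R` (with `0 < R ≤ ∞`) of the system
`Δ_p u = f₁(|x|)·g₁(v)·|∇u|^α`, `Δ_p v = f₂(|x|)·g₂(v)·g₃(|∇u|)`:
a pair of C¹ functions `u, v : [0,R) → ℝ` (with derivatives `u', v'`) such that
the maps `r ↦ r^{n−1}·u'(r)·|u'(r)|^{p−2}` and `r ↦ r^{n−1}·v'(r)·|v'(r)|^{p−2}`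
are differentiable on `(0,R)` with the prescribed derivatives, `u'(0) = v'(0) = 0`,
and `u, v > 0` on `(0,R)`. -/
structure RadialSol (n : ℕ) (p α : ℝ) (f₁ f₂ g₁ g₂ g₃ : ℝ → ℝ) (R : EReal)
    (u v u' v' : ℝ → ℝ) : Prop where
  hu : ∀ r : ℝ, 0 ≤ r → (r : EReal) < R → HasDerivWithinAt u (u' r) (Set.Ici 0) r
  hv : ∀ r : ℝ, 0 ≤ r → (r : EReal) < R → HasDerivWithinAt v (v' r) (Set.Ici 0) r
  hu'c : ContinuousOn u' {r : ℝ | 0 ≤ r ∧ (r : EReal) < R}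
  hv'c : ContinuousOn v' {r : ℝ | 0 ≤ r ∧ (r : EReal) < R}
  hu'0 : u' 0 = 0
  hv'0 : v' 0 = 0
  hupos : ∀ r : ℝ, 0 < r → (r : EReal) < R → 0 < u r
  hvpos : ∀ r : ℝ, 0 < r → (r : EReal) < R → 0 < v r
  hequ : ∀ r : ℝ, 0 < r → (r : EReal) < R →
    HasDerivAt (fun t : ℝ => t ^ (n - 1) * u' t * |u' t| ^ (p - 2))
      (r ^ (n - 1) * (f₁ r * g₁ (v r) * |u' r| ^ α)) r
  heqv : ∀ r : ℝ, 0 < r → (r : EReal) < R →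
    HasDerivAt (fun t : ℝ => t ^ (n - 1) * v' t * |v' t| ^ (p - 2))
      (r ^ (n - 1) * (f₂ r * g₂ (v r) * g₃ (|u' r|))) r

/-- The function `x ↦ x·|x|^{p-2}` is continuous when `p > 1`. -/
lemma psi_cont {p : ℝ} (hp : 1 < p) : Continuous (fun x : ℝ => x * |x| ^ (p - 2)) := by
  rw [continuous_iff_continuousAt]
  intro x
  rcases eq_or_ne x 0 with rfl | hx
  · have h1 : ContinuousAt (fun x : ℝ => |x| ^ (p - 1)) 0 :=
      continuous_abs.continuousAt.rpow_const (Or.inr (by linarith))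
    have h1' : Tendsto (fun x : ℝ => |x| ^ (p - 1)) (nhds 0) (nhds 0) := by
      have : |(0:ℝ)| ^ (p - 1) = 0 := by
        rw [abs_zero, Real.zero_rpow (by linarith : p - 1 ≠ 0)]
      simpa [ContinuousAt, abs_zero, this, Real.zero_rpow (show p - 1 ≠ 0 by linarith)] using h1
    have hb : ∀ y : ℝ, ‖y * |y| ^ (p - 2)‖ ≤ |y| ^ (p - 1) := by
      intro y
      rcases eq_or_ne y 0 with rfl | hy
      · simp [abs_zero, Real.zero_rpow (show p - 1 ≠ 0 by linarith)]
      · have he : |y| ^ (p - 1) = |y| * |y| ^ (p - 2) := by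
          rw [show p - 1 = 1 + (p - 2) by ring, Real.rpow_add (abs_pos.2 hy), Real.rpow_one]
        rw [Real.norm_eq_abs, abs_mul, abs_of_nonneg (Real.rpow_nonneg (abs_nonneg y) _)]
        exact le_of_eq he.symm
    have := squeeze_zero_norm hb h1'
    have h0 : (0:ℝ) * |(0:ℝ)| ^ (p - 2) = 0 := zero_mul _
    simpa [ContinuousAt, h0] using this
  · exact continuousAt_id.mul
      (continuous_abs.continuousAt.rpow_const (Or.inl (abs_ne_zero.2 hx)))

/-- Under (B1), `f` is nonnegative on `[0,∞)`. -/
lemma B1cond.nonneg {f : ℝ → ℝ} (hf : B1cond f) {t : ℝ} (ht : 0 ≤ t) : 0 ≤ f t := by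
  rcases ht.lt_or_eq with h | h
  · exact (hf.2.2 t h).le
  · rw [← h]
    have hc : ContinuousWithinAt f (Set.Ici 0) 0 := hf.1 0 Set.self_mem_Ici
    have hT : Tendsto f (nhdsWithin (0:ℝ) (Set.Ioi 0)) (nhds (f 0)) :=
      hc.tendsto.mono_left (nhdsWithin_mono _ Set.Ioi_subset_Ici_self)
    exact ge_of_tendsto hT
      (Filter.eventually_of_mem self_mem_nhdsWithin fun s hs => (hf.2.2 s hs).le)

/-- Lemma 2.2 (Nonexistence): under (B1) and α ≥ p−1, there is no non-constant positive
radial solution on any ball B_R with R > 0. -/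
theorem nonexistence_of_solutions
    (n : ℕ) (hn : 2 ≤ n) (p α : ℝ) (hp : 1 < p) (hα0 : 0 ≤ α) (hα : p - 1 ≤ α)
    (f₁ f₂ g₁ g₂ g₃ : ℝ → ℝ)
    (hf₁ : B1cond f₁) (hf₂ : B1cond f₂) (hg₁ : B1cond g₁) (hg₂ : B1cond g₂) (hg₃ : B1cond g₃)
    (R : ℝ) (hR : 0 < R) :
    ¬ ∃ u v u' v' : ℝ → ℝ,
        RadialSol n p α f₁ f₂ g₁ g₂ g₃ (R : EReal) u v u' v' ∧
        NonConstOn (R : EReal) u ∧ NonConstOn (R : EReal) v := by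
  rintro ⟨u, v, u', v', sol, hncu, -⟩
  have hp1 : (0:ℝ) < p - 1 := by linarith
  have hα' : (0:ℝ) < α := lt_of_lt_of_le hp1 hα
  have hcoe : ∀ {r : ℝ}, r < R → ((r : EReal) < (R : EReal)) := fun {r} h =>
    EReal.coe_lt_coe_iff.2 h
  have hucont : ∀ {r : ℝ}, 0 ≤ r → r < R → ContinuousWithinAt u (Set.Ici 0) r :=
    fun {r} h1 h2 => (sol.hu r h1 (hcoe h2)).continuousWithinAt
  have hvcont : ∀ {r : ℝ}, 0 ≤ r → r < R → ContinuousWithinAt v (Set.Ici 0) r :=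
    fun {r} h1 h2 => (sol.hv r h1 (hcoe h2)).continuousWithinAt
  have hn1 : n - 1 ≠ 0 := by omega
  -- main claim: u' vanishes on [0, b] for every 0 < b < R
  have key : ∀ b : ℝ, 0 < b → b < R → ∀ s ∈ Set.Icc (0:ℝ) b, u' s = 0 := by
    intro b hb hbR
    have hsub : Set.Icc (0:ℝ) b ⊆ {r : ℝ | 0 ≤ r ∧ (r : EReal) < (R : EReal)} :=
      fun s hs => ⟨hs.1, hcoe (lt_of_le_of_lt hs.2 hbR)⟩
    have huc : ContinuousOn u' (Set.Icc 0 b) := sol.hu'c.mono hsub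
    have hvc : ContinuousOn v (Set.Icc 0 b) := fun s hs =>
      (hvcont hs.1 (lt_of_le_of_lt hs.2 hbR)).mono (fun t ht => ht.1)
    have hvnn : ∀ s ∈ Set.Icc (0:ℝ) b, 0 ≤ v s := by
      intro s hs
      rcases hs.1.lt_or_eq with h | h
      · exact (sol.hvpos s h (hcoe (lt_of_le_of_lt hs.2 hbR))).le
      · rw [← h]
        have hT : Tendsto v (nhdsWithin (0:ℝ) (Set.Ioi 0)) (nhds (v 0)) :=
          (hvcont le_rfl hR).tendsto.mono_left (nhdsWithin_mono _ Set.Ioi_subset_Ici_self)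
        refine ge_of_tendsto hT ?_
        filter_upwards [Ioo_mem_nhdsGT_of_mem (Set.left_mem_Ico.2 hR)] with s' hs'
        exact (sol.hvpos s' hs'.1 (hcoe hs'.2)).le
    have hFc : ContinuousOn (fun s => f₁ s * g₁ (v s)) (Set.Icc 0 b) := by
      apply ContinuousOn.mul (hf₁.1.mono (fun s hs => hs.1))
      exact hg₁.1.comp hvc (fun s hs => hvnn s hs)
    have hFnn : ∀ s ∈ Set.Icc (0:ℝ) b, 0 ≤ f₁ s * g₁ (v s) := fun s hs =>
      mul_nonneg (hf₁.nonneg hs.1) (hg₁.nonneg (hvnn s hs))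
    obtain ⟨M, hM⟩ := (isCompact_Icc).exists_bound_of_continuousOn hFc
    have hM0 : 0 ≤ M := le_trans (norm_nonneg _) (hM 0 (Set.left_mem_Icc.2 hb.le))
    have hFM : ∀ s ∈ Set.Icc (0:ℝ) b, f₁ s * g₁ (v s) ≤ M := fun s hs =>
      (le_abs_self _).trans (hM s hs)
    obtain ⟨W, hW⟩ := (isCompact_Icc).exists_bound_of_continuousOn huc
    have hW0 : 0 ≤ W := le_trans (norm_nonneg _) (hW 0 (Set.left_mem_Icc.2 hb.le))
    have hC0 : 0 ≤ M * W ^ (α - (p - 1)) := mul_nonneg hM0 (Real.rpow_nonneg hW0 _)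
    -- notation
    have hhnn : ∀ s : ℝ, 0 ≤ |u' s| ^ (p - 1) := fun s => Real.rpow_nonneg (abs_nonneg _) _
    have hhc : ContinuousOn (fun s => |u' s| ^ (p - 1)) (Set.Icc 0 b) :=
      (huc.abs).rpow_const (fun s _ => Or.inr hp1.le)
    have hφc : ContinuousOn (fun t : ℝ => t ^ (n - 1) * u' t * |u' t| ^ (p - 2))
        (Set.Icc 0 b) := by
      have : ContinuousOn (fun t : ℝ => t ^ (n - 1) * (u' t * |u' t| ^ (p - 2)))
          (Set.Icc 0 b) :=
        (continuous_pow (n - 1)).continuousOn.mul ((psi_cont hp).comp_continuousOn huc)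
      simpa [mul_assoc] using this
    have hGc : ContinuousOn (fun s : ℝ => s ^ (n - 1) * (f₁ s * g₁ (v s) * |u' s| ^ α))
        (Set.Icc 0 b) := by
      apply ContinuousOn.mul (continuous_pow (n - 1)).continuousOn
      exact hFc.mul ((huc.abs).rpow_const (fun s _ => Or.inr hα0))
    have hGnn : ∀ s ∈ Set.Icc (0:ℝ) b,
        0 ≤ s ^ (n - 1) * (f₁ s * g₁ (v s) * |u' s| ^ α) := fun s hs =>
      mul_nonneg (pow_nonneg hs.1 _)
        (mul_nonneg (hFnn s hs) (Real.rpow_nonneg (abs_nonneg _) _))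
    -- FTC identity
    have hFTC : ∀ x ∈ Set.Icc (0:ℝ) b,
        x ^ (n - 1) * u' x * |u' x| ^ (p - 2)
          = ∫ s in (0:ℝ)..x, s ^ (n - 1) * (f₁ s * g₁ (v s) * |u' s| ^ α) := by
      intro x hx
      have hIcc : Set.Icc (0:ℝ) x ⊆ Set.Icc 0 b := Set.Icc_subset_Icc le_rfl hx.2
      have hder : ∀ s ∈ Set.Ioo (0:ℝ) x,
          HasDerivAt (fun t : ℝ => t ^ (n - 1) * u' t * |u' t| ^ (p - 2))
            (s ^ (n - 1) * (f₁ s * g₁ (v s) * |u' s| ^ α)) s := fun s hs =>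
        sol.hequ s hs.1 (hcoe ((hs.2.trans_le hx.2).trans hbR))
      have heq := intervalIntegral.integral_eq_sub_of_hasDerivAt_of_le hx.1
        (hφc.mono hIcc) hder ((hGc.mono hIcc).intervalIntegrable_of_Icc hx.1)
      rw [heq, show (0:ℝ) ^ (n - 1) * u' 0 * |u' 0| ^ (p - 2) = 0 by
        rw [zero_pow hn1]; ring, sub_zero]
    have hφnn : ∀ x ∈ Set.Icc (0:ℝ) b, 0 ≤ x ^ (n - 1) * u' x * |u' x| ^ (p - 2) := by
      intro x hx
      rw [hFTC x hx]
      exact intervalIntegral.integral_nonneg hx.1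
        (fun s hs => hGnn s (Set.Icc_subset_Icc le_rfl hx.2 hs))
    have hu'nn : ∀ x ∈ Set.Icc (0:ℝ) b, 0 ≤ u' x := by
      intro x hx
      rcases hx.1.lt_or_eq with h0 | h0
      · by_contra hneg
        push_neg at hneg
        have h1 : 0 < x ^ (n - 1) := pow_pos h0 _
        have h2 : 0 < |u' x| ^ (p - 2) := Real.rpow_pos_of_pos (abs_pos.2 hneg.ne) _
        have h3 : 0 < x ^ (n - 1) * (-(u' x)) * |u' x| ^ (p - 2) :=
          mul_pos (mul_pos h1 (neg_pos.2 hneg)) h2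
        have := hφnn x hx
        nlinarith
      · rw [← h0, sol.hu'0]
    have hid : ∀ x ∈ Set.Icc (0:ℝ) b,
        x ^ (n - 1) * u' x * |u' x| ^ (p - 2) = x ^ (n - 1) * (|u' x| ^ (p - 1)) := by
      intro x hx
      have ha : (0:ℝ) ≤ u' x := hu'nn x hx
      have hx1 : |u' x| ^ (p - 1) = u' x * |u' x| ^ (p - 2) := by
        rw [abs_of_nonneg ha]
        rcases ha.lt_or_eq with h | h
        · rw [show p - 1 = 1 + (p - 2) by ring, Real.rpow_add h, Real.rpow_one]
        · rw [← h, Real.zero_rpow (show p - 1 ≠ 0 by linarith), zero_mul]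
      rw [hx1]; ring
    -- key integral inequality
    have hkey : ∀ x ∈ Set.Icc (0:ℝ) b,
        |u' x| ^ (p - 1) ≤ M * W ^ (α - (p - 1)) * ∫ s in (0:ℝ)..x, |u' s| ^ (p - 1) := by
      intro x hx
      rcases hx.1.lt_or_eq with h0 | h0
      · have hIcc : Set.Icc (0:ℝ) x ⊆ Set.Icc 0 b := Set.Icc_subset_Icc le_rfl hx.2
        have hbound : ∀ s ∈ Set.Icc (0:ℝ) x,
            s ^ (n - 1) * (f₁ s * g₁ (v s) * |u' s| ^ α)
              ≤ x ^ (n - 1) * (M * W ^ (α - (p - 1)) * |u' s| ^ (p - 1)) := by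
          intro s hs
          have hs' := hIcc hs
          have e0 : |u' s| ^ α = |u' s| ^ (p - 1) * |u' s| ^ (α - (p - 1)) := by
            rw [← Real.rpow_add' (abs_nonneg _) (show p - 1 + (α - (p - 1)) ≠ 0 by
              intro hcon; rw [show p - 1 + (α - (p - 1)) = α by ring] at hcon; linarith)]
            congr 1; ring
          have e2 : |u' s| ^ (α - (p - 1)) ≤ W ^ (α - (p - 1)) :=
            Real.rpow_le_rpow (abs_nonneg _)
              (by simpa [Real.norm_eq_abs] using hW s hs') (by linarith)
          have e3 : |u' s| ^ α ≤ W ^ (α - (p - 1)) * |u' s| ^ (p - 1) := by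
            rw [e0, mul_comm]
            exact mul_le_mul_of_nonneg_right e2 (hhnn s)
          calc s ^ (n - 1) * (f₁ s * g₁ (v s) * |u' s| ^ α)
              ≤ x ^ (n - 1) * (M * (W ^ (α - (p - 1)) * |u' s| ^ (p - 1))) := by
                apply mul_le_mul (pow_le_pow_left₀ hs.1 hs.2 _)
                · exact mul_le_mul (hFM s hs') e3 (Real.rpow_nonneg (abs_nonneg _) _) hM0
                · exact mul_nonneg (hFnn s hs') (Real.rpow_nonneg (abs_nonneg _) _)
                · exact pow_nonneg (hx.1) _
            _ = x ^ (n - 1) * (M * W ^ (α - (p - 1)) * |u' s| ^ (p - 1)) := by ring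
        have hint1 : IntervalIntegrable
            (fun s : ℝ => s ^ (n - 1) * (f₁ s * g₁ (v s) * |u' s| ^ α)) MeasureTheory.volume 0 x :=
          (hGc.mono hIcc).intervalIntegrable_of_Icc hx.1
        have hint2 : IntervalIntegrable
            (fun s : ℝ => x ^ (n - 1) * (M * W ^ (α - (p - 1)) * |u' s| ^ (p - 1)))
            MeasureTheory.volume 0 x :=
          (continuousOn_const.mul (continuousOn_const.mul
            (hhc.mono hIcc))).intervalIntegrable_of_Icc hx.1
        have hφle : x ^ (n - 1) * u' x * |u' x| ^ (p - 2)
            ≤ x ^ (n - 1) * (M * W ^ (α - (p - 1)) * ∫ s in (0:ℝ)..x, |u' s| ^ (p - 1)) := by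
          rw [hFTC x hx]
          calc (∫ s in (0:ℝ)..x, s ^ (n - 1) * (f₁ s * g₁ (v s) * |u' s| ^ α))
              ≤ ∫ s in (0:ℝ)..x,
                  x ^ (n - 1) * (M * W ^ (α - (p - 1)) * |u' s| ^ (p - 1)) :=
                intervalIntegral.integral_mono_on hx.1 hint1 hint2 hbound
            _ = x ^ (n - 1) * (M * W ^ (α - (p - 1)) * ∫ s in (0:ℝ)..x, |u' s| ^ (p - 1)) := by
                rw [intervalIntegral.integral_const_mul, intervalIntegral.integral_const_mul]
        have hxpow : 0 < x ^ (n - 1) := pow_pos h0 _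
        have h2 : x ^ (n - 1) * (|u' x| ^ (p - 1))
            ≤ x ^ (n - 1) * (M * W ^ (α - (p - 1)) * ∫ s in (0:ℝ)..x, |u' s| ^ (p - 1)) := by
          rw [← hid x hx]; exact hφle
        exact (mul_le_mul_iff_right₀ hxpow).1 h2
      · rw [← h0]
        simp [sol.hu'0, Real.zero_rpow (show p - 1 ≠ 0 by linarith)]
    -- Grönwall
    have hclc : Continuous (fun s : ℝ => min (max s 0) b) :=
      (continuous_id.max continuous_const).min continuous_const
    have hclm : ∀ s : ℝ, min (max s 0) b ∈ Set.Icc (0:ℝ) b := fun s =>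
      ⟨le_min (le_max_right s 0) hb.le, min_le_right _ _⟩
    have hcleq : ∀ s ∈ Set.Icc (0:ℝ) b, min (max s 0) b = s := fun s hs => by
      rw [max_eq_left hs.1, min_eq_left hs.2]
    have htc : Continuous (fun s : ℝ => |u' (min (max s 0) b)| ^ (p - 1)) := by
      have h1 : Continuous fun s : ℝ => u' (min (max s 0) b) :=
        huc.comp_continuous hclc hclm
      exact (h1.abs).rpow_const (fun s => Or.inr hp1.le)
    have htnn : ∀ s : ℝ, 0 ≤ |u' (min (max s 0) b)| ^ (p - 1) := fun s =>
      Real.rpow_nonneg (abs_nonneg _) _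
    set H : ℝ → ℝ := fun x => ∫ s in (0:ℝ)..x, |u' (min (max s 0) b)| ^ (p - 1) with hH
    have hHd : ∀ x : ℝ, HasDerivAt H (|u' (min (max x 0) b)| ^ (p - 1)) x := fun x =>
      (htc.integral_hasStrictDerivAt 0 x).hasDerivAt
    have hHnn : ∀ x : ℝ, 0 ≤ x → 0 ≤ H x := fun x hx =>
      intervalIntegral.integral_nonneg hx (fun s _ => htnn s)
    have hHh : ∀ x ∈ Set.Icc (0:ℝ) b,
        H x = ∫ s in (0:ℝ)..x, |u' s| ^ (p - 1) := by
      intro x hx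
      apply intervalIntegral.integral_congr
      intro s hs
      rw [Set.uIcc_of_le hx.1] at hs
      show |u' (min (max s 0) b)| ^ (p - 1) = |u' s| ^ (p - 1)
      rw [hcleq s (Set.Icc_subset_Icc le_rfl hx.2 hs)]
    have hGron := norm_le_gronwallBound_of_norm_deriv_right_le
      (f := H) (f' := fun s => |u' (min (max s 0) b)| ^ (p - 1))
      (δ := 0) (K := M * W ^ (α - (p - 1))) (ε := 0) (a := 0) (b := b)
      (fun x _ => (hHd x).continuousAt.continuousWithinAt)
      (fun x _ => (hHd x).hasDerivWithinAt)
      (by simp [hH])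
      (by
        intro x hx
        have hx' : x ∈ Set.Icc (0:ℝ) b := ⟨hx.1, hx.2.le⟩
        rw [Real.norm_eq_abs, Real.norm_eq_abs, abs_of_nonneg (htnn x),
          abs_of_nonneg (hHnn x hx.1), add_zero, hcleq x hx', hHh x hx']
        exact hkey x hx')
    have hH0 : ∀ x ∈ Set.Icc (0:ℝ) b, H x = 0 := by
      intro x hx
      have := hGron x hx
      rw [gronwallBound_ε0, zero_mul] at this
      exact norm_le_zero_iff.1 this
    intro s hs
    have hle : |u' s| ^ (p - 1) ≤ 0 := by
      have h1 := hkey s hs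
      rw [← hHh s hs, hH0 s hs, mul_zero] at h1
      exact h1
    have habs : |u' s| = 0 := by
      by_contra hne
      have hpos : (0:ℝ) < |u' s| := lt_of_le_of_ne (abs_nonneg _) (Ne.symm hne)
      exact absurd hle (not_le.2 (Real.rpow_pos_of_pos hpos _))
    exact abs_eq_zero.1 habs
  -- conclude: u is constant, contradiction
  apply hncu
  refine ⟨u 0, fun r hr hrR => ?_⟩
  have hrR' : r < R := EReal.coe_lt_coe_iff.1 hrR
  rcases hr.lt_or_eq with h0 | h0
  · have hcont : ContinuousOn u (Set.Icc 0 r) := fun s hs =>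
      (hucont hs.1 (lt_of_le_of_lt hs.2 hrR')).mono (fun t ht => ht.1)
    have hderiv : ∀ x ∈ Set.Ico (0:ℝ) r, HasDerivWithinAt u (u' x) (Set.Ici x) x := fun x hx =>
      (sol.hu x hx.1 (hcoe (hx.2.trans hrR'))).mono (Set.Ici_subset_Ici.2 hx.1)
    have hbound : ∀ x ∈ Set.Ico (0:ℝ) r, ‖u' x‖ ≤ 0 := by
      intro x hx
      rw [key r h0 hrR' x ⟨hx.1, hx.2.le⟩, norm_zero]
    have hmvt := norm_image_sub_le_of_norm_deriv_right_le_segment hcont hderiv hbound r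
      (Set.right_mem_Icc.2 hr)
    rw [zero_mul, norm_le_zero_iff, sub_eq_zero] at hmvt
    exact hmvt
  · rw [← h0]
end
end

section
/- Assume hypothesis (B1) and 0 ≤ α < p − 1, and let (u,v) be a non-constant positive radial solution on B_R of the system Δ_p u = f₁(|x|)·g₁(v)·|∇u|^α, Δ_p v = f₂(|x|)·g₂(v)·g₃(|∇u|). Then the function r ↦ v'(r)^{p−1} is differentiable on (0,R) and, for all 0 < r < R, (1/n)·f₂(r)·g₂(v(r))·g₃(u'(r)) ≤ (v'(r)^{p−1})' ≤ f₂(r)·g₂(v(r))·g₃(u'(r)). -/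
open Set Filter Topology

noncomputable section

lemma psign_eq {p : ℝ} (hp : 1 < p) {x : ℝ} (hx : 0 ≤ x) :
    x * |x| ^ (p - 2) = x ^ (p - 1) := by
  rcases eq_or_lt_of_le hx with h | h
  · rw [← h, zero_mul, Real.zero_rpow (by linarith : p - 1 ≠ 0)]
  · rw [abs_of_pos h]
    rw [show p - 1 = 1 + (p-2) by ring, Real.rpow_add h, Real.rpow_one]

lemma B1nonneg {f : ℝ → ℝ} (hf : B1cond f) {x : ℝ} (hx : 0 ≤ x) : 0 ≤ f x := by
  rcases eq_or_lt_of_le hx with h | h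
  · subst h
    have hc : ContinuousWithinAt f (Ici 0) 0 := hf.1 0 (by simp)
    have : Tendsto f (𝓝[>] (0:ℝ)) (𝓝 (f 0)) :=
      hc.tendsto.mono_left (nhdsWithin_mono _ Ioi_subset_Ici_self)
    exact ge_of_tendsto this (eventually_mem_nhdsWithin.mono fun t ht => (hf.2.2 t ht).le)
  · exact (hf.2.2 x h).le

lemma le_of_hasDerivAt_nonneg' {W Φ : ℝ → ℝ} {t r : ℝ} (htr : t ≤ r)
    (hWc : ContinuousOn W (Icc t r))
    (hW : ∀ x ∈ Ioo t r, HasDerivAt W (Φ x) x) (hΦ : ∀ x ∈ Ioo t r, 0 ≤ Φ x) :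
    W t ≤ W r := by
  have hmono : MonotoneOn W (Icc t r) := by
    apply monotoneOn_of_deriv_nonneg (convex_Icc t r) hWc
    · intro x hx
      rw [interior_Icc] at hx
      exact (hW x hx).differentiableAt.differentiableWithinAt
    · intro x hx
      rw [interior_Icc] at hx
      rw [(hW x hx).deriv]
      exact hΦ x hx
  exact hmono (left_mem_Icc.2 htr) (right_mem_Icc.2 htr) htr

lemma le_of_hasDerivAt_nonneg {W Φ : ℝ → ℝ} {t r : ℝ} (htr : t ≤ r)
    (hW : ∀ x ∈ Icc t r, HasDerivAt W (Φ x) x) (hΦ : ∀ x ∈ Ioo t r, 0 ≤ Φ x) :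
    W t ≤ W r :=
  le_of_hasDerivAt_nonneg' htr
    (fun x hx => (hW x hx).continuousAt.continuousWithinAt)
    (fun x hx => hW x (Ioo_subset_Icc_self hx)) hΦ

lemma sign_lemma {n : ℕ} {p : ℝ} (hp : 1 < p) {b : ℝ}
    {w' Φ : ℝ → ℝ}
    (hwc : Tendsto w' (𝓝[>] (0:ℝ)) (𝓝 0))
    (hW : ∀ s ∈ Ioo (0:ℝ) b,
      HasDerivAt (fun t => t ^ (n-1) * w' t * |w' t| ^ (p-2)) (Φ s) s)
    (hΦ : ∀ s ∈ Ioo (0:ℝ) b, 0 ≤ Φ s) :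
    ∀ s ∈ Ioo (0:ℝ) b, 0 ≤ w' s := by
  set W : ℝ → ℝ := fun t => t ^ (n-1) * w' t * |w' t| ^ (p-2) with hWdef
  have habs : ∀ t : ℝ, ‖W t‖ = |t| ^ (n-1) * |w' t| ^ (p-1) := by
    intro t
    have h1 : |w' t| * |w' t| ^ (p-2) = |w' t| ^ (p-1) := by
      have := psign_eq hp (abs_nonneg (w' t))
      rwa [abs_abs] at this
    rw [Real.norm_eq_abs, hWdef]
    rw [abs_mul, abs_mul, abs_pow, abs_of_nonneg (Real.rpow_nonneg (abs_nonneg _) _),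
      mul_assoc, h1]
  have hlim : Tendsto W (𝓝[>] (0:ℝ)) (𝓝 0) := by
    apply squeeze_zero_norm (fun t => (habs t).le)
    have h1 : Tendsto (fun t : ℝ => |t| ^ (n-1)) (𝓝[>] (0:ℝ)) (𝓝 (|(0:ℝ)| ^ (n-1))) :=
      ((continuous_abs.pow (n-1)).tendsto 0).mono_left nhdsWithin_le_nhds
    have h2 : Tendsto (fun t : ℝ => |w' t| ^ (p-1)) (𝓝[>] (0:ℝ)) (𝓝 0) := by
      have hc : ContinuousAt (fun x : ℝ => |x| ^ (p-1)) 0 := by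
        show ContinuousAt ((fun x : ℝ => x ^ (p-1)) ∘ (fun x : ℝ => |x|)) 0
        exact ContinuousAt.comp (Real.continuousAt_rpow_const _ _ (Or.inr (by linarith)))
          continuous_abs.continuousAt
      have := (hc.tendsto.comp hwc)
      simpa [Function.comp_def, Real.zero_rpow (by linarith : p - 1 ≠ 0)] using this
    have := h1.mul h2
    simpa using this
  intro s hs
  have hWs : 0 ≤ W s := by
    apply le_of_tendsto hlim
    filter_upwards [Ioo_mem_nhdsGT_of_mem
      (by constructor <;> [rfl; exact hs.1] : (0:ℝ) ∈ Ico 0 s)] with t ht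
    exact le_of_hasDerivAt_nonneg ht.2.le
      (fun x hx => hW x ⟨lt_of_lt_of_le ht.1 hx.1, lt_of_le_of_lt hx.2 hs.2⟩)
      (fun x hx => hΦ x ⟨lt_trans ht.1 hx.1, lt_of_le_of_lt hx.2.le hs.2⟩)
  by_contra hneg
  push_neg at hneg
  have h1 : (0:ℝ) < s ^ (n-1) := pow_pos hs.1 _
  have h2 : (0:ℝ) < |w' s| ^ (p-2) := Real.rpow_pos_of_pos (abs_pos.2 hneg.ne) _
  have : W s < 0 := by
    rw [hWdef]
    have : s ^ (n-1) * w' s < 0 := mul_neg_of_pos_of_neg h1 hneg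
    exact mul_neg_of_neg_of_pos this h2
  linarith


set_option maxHeartbeats 2000000 in
/-- Lemma 2.3, estimate (est2): two-sided bounds on the derivative of v'(r)^{p−1}. -/
theorem convexity_estimate_v
    (n : ℕ) (hn : 2 ≤ n) (p α : ℝ) (hp : 1 < p) (hα0 : 0 ≤ α) (hα : α < p - 1)
    (f₁ f₂ g₁ g₂ g₃ : ℝ → ℝ)
    (hf₁ : B1cond f₁) (hf₂ : B1cond f₂) (hg₁ : B1cond g₁) (hg₂ : B1cond g₂) (hg₃ : B1cond g₃)
    (R : EReal) (hR : 0 < R) (u v u' v' : ℝ → ℝ)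
    (hsol : RadialSol n p α f₁ f₂ g₁ g₂ g₃ R u v u' v')
    (hunc : NonConstOn R u) (hvnc : NonConstOn R v) :
    ∀ r : ℝ, 0 < r → (r : EReal) < R →
      ∃ d : ℝ, HasDerivAt (fun t : ℝ => v' t ^ (p - 1)) d r ∧
        (1 / (n : ℝ)) * (f₂ r * g₂ (v r) * g₃ (u' r)) ≤ d ∧
        d ≤ f₂ r * g₂ (v r) * g₃ (u' r) := by
  intro r hr hrR
  have hp1 : (0:ℝ) < p - 1 := by linarith
  -- choose a real bound b with r < b and [0,b) inside the domain
  obtain ⟨b, hrb, hbR⟩ : ∃ b : ℝ, r < b ∧ ∀ s : ℝ, s < b → (s : EReal) < R := by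
    rcases eq_or_ne R ⊤ with rfl | hRtop
    · exact ⟨r + 1, by linarith, fun s _ => EReal.coe_lt_top s⟩
    · have hRbot : R ≠ ⊥ := by
        intro h; rw [h] at hR; exact absurd hR (by simp)
      refine ⟨R.toReal, ?_, fun s hs => ?_⟩
      · exact EReal.coe_lt_coe_iff.1 (by rwa [EReal.coe_toReal hRtop hRbot])
      · rw [← EReal.coe_toReal hRtop hRbot]; exact_mod_cast hs
  have hb0 : (0:ℝ) < b := hr.trans hrb
  have hIcoS : Ico (0:ℝ) b ⊆ {x : ℝ | 0 ≤ x ∧ (x : EReal) < R} :=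
    fun x hx => ⟨hx.1, hbR x hx.2⟩
  -- continuity facts
  have hu'cont : ContinuousOn u' (Ico 0 b) := hsol.hu'c.mono hIcoS
  have hv'cont : ContinuousOn v' (Ico 0 b) := hsol.hv'c.mono hIcoS
  have hvcont : ContinuousOn v (Ico 0 b) := fun x hx =>
    ((hsol.hv x hx.1 (hbR x hx.2)).continuousWithinAt).mono (fun y hy => hy.1)
  have hnhds : 𝓝[>] (0:ℝ) ≤ 𝓝[Ico 0 b] (0:ℝ) := by
    apply nhdsWithin_le_iff.2
    exact mem_of_superset (Ioo_mem_nhdsGT_of_mem ⟨le_rfl, hb0⟩) Ioo_subset_Ico_self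
  -- nonnegativity of u' and v'
  have hΦu : ∀ s ∈ Ioo (0:ℝ) b,
      0 ≤ s ^ (n-1) * (f₁ s * g₁ (v s) * |u' s| ^ α) := by
    intro s hs
    have := hsol.hvpos s hs.1 (hbR s hs.2)
    exact mul_nonneg (pow_nonneg hs.1.le _) (mul_nonneg (mul_nonneg
      (B1nonneg hf₁ hs.1.le) (hg₁.2.2 _ this).le) (Real.rpow_nonneg (abs_nonneg _) _))
  have hΦv : ∀ s ∈ Ioo (0:ℝ) b,
      0 ≤ s ^ (n-1) * (f₂ s * g₂ (v s) * g₃ (|u' s|)) := by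
    intro s hs
    have := hsol.hvpos s hs.1 (hbR s hs.2)
    exact mul_nonneg (pow_nonneg hs.1.le _) (mul_nonneg (mul_nonneg
      (B1nonneg hf₂ hs.1.le) (hg₂.2.2 _ this).le) (B1nonneg hg₃ (abs_nonneg _)))
  have hequb : ∀ s ∈ Ioo (0:ℝ) b,
      HasDerivAt (fun t : ℝ => t ^ (n-1) * u' t * |u' t| ^ (p-2))
        (s ^ (n-1) * (f₁ s * g₁ (v s) * |u' s| ^ α)) s :=
    fun s hs => hsol.hequ s hs.1 (hbR s hs.2)
  have heqvb : ∀ s ∈ Ioo (0:ℝ) b,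
      HasDerivAt (fun t : ℝ => t ^ (n-1) * v' t * |v' t| ^ (p-2))
        (s ^ (n-1) * (f₂ s * g₂ (v s) * g₃ (|u' s|))) s :=
    fun s hs => hsol.heqv s hs.1 (hbR s hs.2)
  have hu'nn : ∀ s ∈ Ioo (0:ℝ) b, 0 ≤ u' s := by
    apply sign_lemma hp _ hequb hΦu
    have := (hu'cont 0 ⟨le_rfl, hb0⟩).tendsto.mono_left hnhds
    rwa [hsol.hu'0] at this
  have hv'nn : ∀ s ∈ Ioo (0:ℝ) b, 0 ≤ v' s := by
    apply sign_lemma hp _ heqvb hΦv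
    have := (hv'cont 0 ⟨le_rfl, hb0⟩).tendsto.mono_left hnhds
    rwa [hsol.hv'0] at this
  have hu'nn' : ∀ s, 0 ≤ s → s < b → 0 ≤ u' s := by
    intro s hs hsb
    rcases eq_or_lt_of_le hs with rfl | h
    · rw [hsol.hu'0]
    · exact hu'nn s ⟨h, hsb⟩
  have hv'nn' : ∀ s, 0 ≤ s → s < b → 0 ≤ v' s := by
    intro s hs hsb
    rcases eq_or_lt_of_le hs with rfl | h
    · rw [hsol.hv'0]
    · exact hv'nn s ⟨h, hsb⟩
  have hvnn : ∀ s, 0 ≤ s → s < b → 0 ≤ v s := by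
    intro s hs hsb
    rcases eq_or_lt_of_le hs with rfl | h
    · have hlim : Tendsto v (𝓝[>] (0:ℝ)) (𝓝 (v 0)) :=
        (hvcont 0 ⟨le_rfl, hb0⟩).tendsto.mono_left hnhds
      apply ge_of_tendsto hlim
      filter_upwards [Ioo_mem_nhdsGT_of_mem ⟨le_rfl, hb0⟩] with t ht
      exact (hsol.hvpos t ht.1 (hbR t ht.2)).le
    · exact (hsol.hvpos s h (hbR s hsb)).le
  have hvmono : ∀ t s, 0 ≤ t → t ≤ s → s < b → v t ≤ v s := by
    intro t s ht hts hsb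
    apply le_of_hasDerivAt_nonneg' hts
    · exact hvcont.mono (fun x hx => ⟨ht.trans hx.1, lt_of_le_of_lt hx.2 hsb⟩)
    · intro x hx
      exact (hsol.hv x (ht.trans hx.1.le) (hbR x (hx.2.trans hsb))).hasDerivAt
        (Ici_mem_nhds (ht.trans_lt hx.1))
    · intro x hx
      exact hv'nn x ⟨ht.trans_lt hx.1, hx.2.trans hsb⟩
  -- the coefficient functions
  set G : ℝ → ℝ := fun s => f₁ s * g₁ (v s) with hGdef
  set F : ℝ → ℝ := fun s => f₂ s * g₂ (v s) * g₃ (|u' s|) with hFdef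
  have hGc : ContinuousOn G (Ico 0 b) :=
    (hf₁.1.mono (fun x hx => hx.1)).mul
      (hg₁.1.comp hvcont (fun x hx => hvnn x hx.1 hx.2))
  have hFc : ContinuousOn F (Ico 0 b) :=
    ((hf₂.1.mono (fun x hx => hx.1)).mul
      (hg₂.1.comp hvcont (fun x hx => hvnn x hx.1 hx.2))).mul
      (hg₃.1.comp hu'cont.abs (fun x _ => mem_Ici.2 (abs_nonneg _)))
  have hGnn : ∀ s ∈ Ico (0:ℝ) b, 0 ≤ G s := fun s hs =>
    mul_nonneg (B1nonneg hf₁ hs.1) (B1nonneg hg₁ (hvnn s hs.1 hs.2))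
  have hFnn : ∀ s ∈ Ico (0:ℝ) b, 0 ≤ F s := fun s hs =>
    mul_nonneg (mul_nonneg (B1nonneg hf₂ hs.1) (B1nonneg hg₂ (hvnn s hs.1 hs.2)))
      (B1nonneg hg₃ (abs_nonneg _))
  have hGmono : ∀ t s, 0 ≤ t → t ≤ s → s < b → G t ≤ G s := by
    intro t s ht hts hsb
    apply mul_le_mul (hf₁.2.1 (mem_Ici.2 ht) (mem_Ici.2 (ht.trans hts)) hts)
      (hg₁.2.1 (mem_Ici.2 (hvnn t ht (lt_of_le_of_lt hts hsb)))
        (mem_Ici.2 (hvnn s (ht.trans hts) hsb)) (hvmono t s ht hts hsb))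
      (B1nonneg hg₁ (hvnn t ht (lt_of_le_of_lt hts hsb)))
      (B1nonneg hf₁ (ht.trans hts))
  -- exponents
  set ν : ℝ := (n:ℝ) - 1 with hνdef
  clear_value ν
  have hν1 : (1:ℝ) ≤ ν := by
    rw [hνdef]
    have : (2:ℝ) ≤ (n:ℝ) := by exact_mod_cast hn
    linarith
  have hcastn : ((n - 1 : ℕ) : ℝ) = ν := by
    rw [Nat.cast_sub (by omega : 1 ≤ n), hνdef, Nat.cast_one]
  have hpow_rpow : ∀ s : ℝ, 0 ≤ s → (s:ℝ) ^ (n-1) = s ^ ν := by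
    intro s hs
    rw [← hcastn, Real.rpow_natCast]
  set c : ℝ := (p - 1 - α) / (p - 1) with hcdef
  clear_value c
  have hc0 : 0 < c := by rw [hcdef]; exact div_pos (by linarith) hp1
  have hpc : (p - 1) * c = p - 1 - α := by
    rw [hcdef]; field_simp
  set m : ℝ := c * ν with hmdef
  clear_value m
  have hm0 : 0 < m := by
    rw [hmdef]
    exact lt_of_lt_of_le hc0 (le_mul_of_one_le_right hc0.le hν1)
  have hcontrp : ∀ q : ℝ, 0 < q → Continuous fun x : ℝ => x ^ q := fun q hq =>
    continuous_iff_continuousAt.2 fun x => Real.continuousAt_rpow_const x q (Or.inr hq.le)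
  -- the function H̃ = s^{n-1} (u')^{p-1} and its derivative
  set H : ℝ → ℝ := fun s => s ^ (n-1) * (u' s) ^ (p-1) with hHdef
  have hHD : ∀ s ∈ Ioo (0:ℝ) b, HasDerivAt H (s ^ (n-1) * (G s * (u' s) ^ α)) s := by
    intro s hs
    have heq : H =ᶠ[𝓝 s] (fun x => x ^ (n-1) * u' x * |u' x| ^ (p-2)) := by
      filter_upwards [Ioo_mem_nhds hs.1 hs.2] with x hx
      rw [hHdef, mul_assoc, psign_eq hp (hu'nn x hx)]
    have := (hequb s hs).congr_of_eventuallyEq heq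
    rw [abs_of_nonneg (hu'nn s hs)] at this
    exact this
  have hHcont : ContinuousOn H (Ico 0 b) :=
    (continuous_pow (n-1)).continuousOn.mul ((hcontrp (p-1) hp1).comp_continuousOn hu'cont)
  -- monotonicity of u' on [0, r]
  have hu'mono : ∀ t, 0 ≤ t → t ≤ r → u' t ≤ u' r := by
    intro t ht htr
    rcases eq_or_lt_of_le htr with rfl | htr
    · exact le_rfl
    have hu't := hu'nn' t ht (htr.trans hrb)
    rcases eq_or_lt_of_le hu't with hu't0 | hu'tpos
    · rw [← hu't0]; exact hu'nn' r hr.le hrb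
    have ht0 : 0 < t := by
      rcases eq_or_lt_of_le ht with rfl | h
      · rw [hsol.hu'0] at hu'tpos; exact absurd hu'tpos (lt_irrefl 0)
      · exact h
    -- the last zero of u' before t
    set A : Set ℝ := Icc 0 t ∩ u' ⁻¹' {0} with hAdef
    have hAne : A.Nonempty := ⟨0, ⟨le_rfl, ht0.le⟩, hsol.hu'0⟩
    have hAclosed : IsClosed A :=
      ContinuousOn.preimage_isClosed_of_isClosed
        (hu'cont.mono (fun x hx => ⟨hx.1, lt_of_le_of_lt hx.2 (htr.trans hrb)⟩))
        isClosed_Icc isClosed_singleton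
    have hAcomp : IsCompact A :=
      isCompact_Icc.of_isClosed_subset hAclosed inter_subset_left
    set a : ℝ := sSup A with hadef
    have haA : a ∈ A := hAcomp.sSup_mem hAne
    have ha0 : 0 ≤ a := haA.1.1
    have hat : a ≤ t := haA.1.2
    have hu'a : u' a = 0 := haA.2
    have halt : a < t := lt_of_le_of_ne hat (by
      intro h; rw [h] at hu'a; rw [hu'a] at hu'tpos; exact lt_irrefl 0 hu'tpos)
    -- u' is positive on (a, b)
    have hpos : ∀ s, a < s → s < b → 0 < u' s := by
      intro s has hsb
      have hs0 : 0 < s := lt_of_le_of_lt ha0 has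
      rcases eq_or_lt_of_le (hu'nn s ⟨hs0, hsb⟩) with h0 | h
      · exfalso
        by_cases hst : s ≤ t
        · have hsA : s ∈ A := ⟨⟨hs0.le, hst⟩, h0.symm⟩
          have : s ≤ a := le_csSup ⟨t, fun x hx => hx.1.2⟩ hsA
          linarith
        · push_neg at hst
          have hWts := le_of_hasDerivAt_nonneg (le_of_lt hst)
            (fun x hx => hequb x ⟨lt_of_lt_of_le ht0 hx.1, lt_of_le_of_lt hx.2 hsb⟩)
            (fun x hx => hΦu x ⟨lt_trans ht0 hx.1, lt_trans hx.2 hsb⟩)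
          have h1 : 0 < t ^ (n-1) * u' t * |u' t| ^ (p-2) :=
            mul_pos (mul_pos (pow_pos ht0 _) hu'tpos)
              (Real.rpow_pos_of_pos (abs_pos.2 hu'tpos.ne') _)
          rw [← h0] at hWts
          simp only [mul_zero, zero_mul] at hWts
          linarith
      · exact h
    have hHpos : ∀ s, a < s → s < b → 0 < H s := fun s has hsb =>
      mul_pos (pow_pos (lt_of_le_of_lt ha0 has) _)
        (Real.rpow_pos_of_pos (hpos s has hsb) _)
    set Ψ : ℝ → ℝ := fun s => (H s) ^ c with hΨdef
    have hΨD : ∀ s, a < s → s < b → HasDerivAt Ψ (c * s ^ m * G s) s := by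
      intro s has hsb
      have hs0 : 0 < s := lt_of_le_of_lt ha0 has
      have hy : 0 < u' s := hpos s has hsb
      have hD := (hHD s ⟨hs0, hsb⟩).rpow_const (p := c) (Or.inl (hHpos s has hsb).ne')
      convert hD using 1
      rw [show s ^ (n-1) * (G s * u' s ^ α) * c * H s ^ (c-1)
          = c * H s ^ (c-1) * (s ^ (n-1) * (G s * u' s ^ α)) from by ring]
      rw [hHdef]
      show c * s ^ m * G s
        = c * ((s:ℝ) ^ (n-1) * u' s ^ (p-1)) ^ (c-1) * (s ^ (n-1) * (G s * u' s ^ α))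
      rw [hpow_rpow s hs0.le,
        Real.mul_rpow (Real.rpow_nonneg hs0.le ν) (Real.rpow_nonneg hy.le _),
        ← Real.rpow_mul hs0.le, ← Real.rpow_mul hy.le]
      rw [show c * (s ^ (ν*(c-1)) * u' s ^ ((p-1)*(c-1))) * (s ^ ν * (G s * u' s ^ α))
          = c * (s ^ (ν*(c-1)) * s ^ ν) * (u' s ^ ((p-1)*(c-1)) * u' s ^ α) * G s from by ring]
      rw [← Real.rpow_add hs0, ← Real.rpow_add hy]
      rw [show ν*(c-1) + ν = m from by rw [hmdef]; ring,
        show (p-1)*(c-1) + α = 0 from by rw [mul_sub, mul_one, hpc]; ring,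
        Real.rpow_zero, mul_one]
    have hΨa : Ψ a = 0 := by
      rw [hΨdef]
      show (H a) ^ c = 0
      rw [hHdef]
      show ((a:ℝ) ^ (n-1) * u' a ^ (p-1)) ^ c = 0
      rw [hu'a, Real.zero_rpow (by linarith : p - 1 ≠ 0), mul_zero,
        Real.zero_rpow hc0.ne']
    have hΨcont : ContinuousOn Ψ (Ico 0 b) := (hcontrp c hc0).comp_continuousOn hHcont
    have hZle : ∀ s, a < s → s < b → u' s ^ (p-1-α) ≤ c * s * G s / (m+1) := by
      intro s has hsb
      have hs0 : 0 < s := lt_of_le_of_lt ha0 has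
      have hIccsub : Icc a s ⊆ Ico 0 b := fun x hx =>
        ⟨ha0.trans hx.1, lt_of_le_of_lt hx.2 hsb⟩
      have hint1 : IntervalIntegrable (fun x => c * x ^ m * G x) MeasureTheory.volume a s := by
        apply ContinuousOn.intervalIntegrable
        rw [uIcc_of_le (le_of_lt has)]
        exact ((continuous_const.mul (hcontrp m hm0)).continuousOn).mul (hGc.mono hIccsub)
      have hFTC : ∫ x in a..s, c * x ^ m * G x = Ψ s - Ψ a := by
        apply intervalIntegral.integral_eq_sub_of_hasDeriv_right_of_le (le_of_lt has)
          (hΨcont.mono hIccsub)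
          (fun x hx => (hΨD x hx.1 (hx.2.trans hsb)).hasDerivWithinAt) hint1
      have hint2 : IntervalIntegrable (fun x => c * x ^ m * G s) MeasureTheory.volume a s := by
        apply ContinuousOn.intervalIntegrable
        rw [uIcc_of_le (le_of_lt has)]
        exact ((continuous_const.mul (hcontrp m hm0)).continuousOn).mul continuousOn_const
      have hmono' : ∫ x in a..s, c * x ^ m * G x ≤ ∫ x in a..s, c * x ^ m * G s := by
        apply intervalIntegral.integral_mono_on (le_of_lt has) hint1 hint2
        intro x hx
        have hx' := hIccsub hx
        exact mul_le_mul_of_nonneg_left (hGmono x s hx'.1 hx.2 hsb)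
          (mul_nonneg hc0.le (Real.rpow_nonneg hx'.1 _))
      have hval : ∫ x in a..s, c * x ^ m * G s
          = c * G s * ((s ^ (m+1) - a ^ (m+1)) / (m+1)) := by
        rw [show (fun x => c * x ^ m * G s) = fun x : ℝ => (c * G s) * x ^ m from
          by funext x; ring]
        rw [intervalIntegral.integral_const_mul,
          integral_rpow (Or.inl (by linarith : (-1:ℝ) < m))]
      have hGs : 0 ≤ G s := hGnn s ⟨hs0.le, hsb⟩
      have ham : 0 ≤ a ^ (m+1) := Real.rpow_nonneg ha0 _
      have hm1 : (0:ℝ) < m + 1 := by linarith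
      have hΨle : Ψ s ≤ c * G s * s ^ (m+1) / (m+1) := by
        have h1 : Ψ s = ∫ x in a..s, c * x ^ m * G x := by rw [hFTC, hΨa]; ring
        rw [h1]
        calc ∫ x in a..s, c * x ^ m * G x
            ≤ ∫ x in a..s, c * x ^ m * G s := hmono'
          _ = c * G s * ((s ^ (m+1) - a ^ (m+1)) / (m+1)) := hval
          _ ≤ c * G s * s ^ (m+1) / (m+1) := by
              rw [mul_div_assoc]
              apply mul_le_mul_of_nonneg_left _ (mul_nonneg hc0.le hGs)
              exact (div_le_div_iff_of_pos_right hm1).2 (by linarith)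
      have hΨeq : Ψ s = s ^ m * u' s ^ (p-1-α) := by
        rw [hΨdef]
        show (H s) ^ c = _
        rw [hHdef]
        show ((s:ℝ) ^ (n-1) * u' s ^ (p-1)) ^ c = _
        rw [hpow_rpow s hs0.le,
          Real.mul_rpow (Real.rpow_nonneg hs0.le _)
            (Real.rpow_nonneg (hpos s has hsb).le _),
          ← Real.rpow_mul hs0.le, ← Real.rpow_mul (hpos s has hsb).le,
          show ν * c = m from by rw [hmdef]; ring, hpc]
      rw [hΨeq] at hΨle
      have hsm : 0 < s ^ m := Real.rpow_pos_of_pos hs0 _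
      have hs1 : s ^ (m+1) = s ^ m * s := Real.rpow_add_one hs0.ne' m
      rw [hs1] at hΨle
      have h2 : s ^ m * u' s ^ (p-1-α) ≤ s ^ m * (c * s * G s / (m+1)) := by
        calc s ^ m * u' s ^ (p-1-α) ≤ c * G s * (s ^ m * s) / (m+1) := hΨle
          _ = s ^ m * (c * s * G s / (m+1)) := by ring
      exact (mul_le_mul_iff_right₀ hsm).1 h2
    -- derivative of (u')^{p-1} written as H / s^{n-1}
    set dYf : ℝ → ℝ := fun s =>
      (s ^ (n-1) * (G s * u' s ^ α) * s ^ (n-1) - H s * (↑(n-1) * s ^ (n-1-1)))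
        / ((s ^ (n-1)) ^ 2) with hdYdef
    have hYD : ∀ s, a < s → s < b →
        HasDerivAt (fun x => H x / x ^ (n-1)) (dYf s) s ∧ 0 ≤ dYf s := by
      intro s has hsb
      have hs0 : 0 < s := lt_of_le_of_lt ha0 has
      have hy : 0 < u' s := hpos s has hsb
      have hNs : (s:ℝ) ^ (n-1) ≠ 0 := (pow_pos hs0 _).ne'
      constructor
      · exact (hHD s ⟨hs0, hsb⟩).div (hasDerivAt_pow (n-1) s) hNs
      rw [hdYdef]
      apply div_nonneg _ (sq_nonneg _)
      have hyp : u' s ^ (p-1) = u' s ^ α * u' s ^ (p-1-α) := by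
        rw [← Real.rpow_add hy]; ring_nf
      have hZ := hZle s has hsb
      have hGs : 0 ≤ G s := hGnn s ⟨hs0.le, hsb⟩
      have hνZ : ν * u' s ^ (p-1-α) ≤ s * G s := by
        have hm1 : (0:ℝ) < m + 1 := by linarith
        have h1 : u' s ^ (p-1-α) * (m+1) ≤ c * s * G s := (le_div_iff₀ hm1).1 hZ
        have h2 : ν * (u' s ^ (p-1-α) * (m+1)) ≤ ν * (c * s * G s) :=
          mul_le_mul_of_nonneg_left h1 (by linarith)
        have h3 : ν * (c * s * G s) = m * (s * G s) := by rw [hmdef]; ring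
        have h6 : 0 ≤ s * G s := mul_nonneg hs0.le hGs
        have h7 : ν * u' s ^ (p-1-α) * (m+1) ≤ (s * G s) * (m+1) := by nlinarith [h2, h3, h6]
        exact le_of_mul_le_mul_right h7 hm1
      have hpow1 : (s:ℝ) ^ (n-1) = s ^ (n-2) * s := by
        rw [← pow_succ]
        congr 1
        omega
      have hnum : s ^ (n-1) * (G s * u' s ^ α) * s ^ (n-1) - H s * (↑(n-1) * s ^ (n-1-1))
          = s ^ (n-2) * s * s ^ (n-2) * u' s ^ α * (s * G s - ν * u' s ^ (p-1-α)) := by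
        rw [hHdef]
        show s ^ (n-1) * (G s * u' s ^ α) * s ^ (n-1)
            - ((s:ℝ) ^ (n-1) * u' s ^ (p-1)) * (↑(n-1) * s ^ (n-1-1)) = _
        rw [hcastn, hyp, show n-1-1 = n-2 from by omega, hpow1]
        ring
      rw [hnum]
      apply mul_nonneg _ (by linarith)
      apply mul_nonneg _ (Real.rpow_nonneg hy.le _)
      apply mul_nonneg (mul_nonneg (pow_nonneg hs0.le _) hs0.le) (pow_nonneg hs0.le _)
    -- conclude u' t ≤ u' r
    have hsubtr : Icc t r ⊆ Ico 0 b := fun x hx =>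
      ⟨ht.trans hx.1, lt_of_le_of_lt hx.2 hrb⟩
    have hYt : (fun x => H x / x ^ (n-1)) t ≤ (fun x => H x / x ^ (n-1)) r := by
      apply le_of_hasDerivAt_nonneg' htr.le
      · exact (hHcont.mono hsubtr).div ((continuous_pow (n-1)).continuousOn)
          (fun x hx => (pow_pos (lt_of_lt_of_le ht0 hx.1) _).ne')
      · exact fun x hx => (hYD x (lt_trans halt hx.1) (lt_trans hx.2 hrb)).1
      · exact fun x hx => (hYD x (lt_trans halt hx.1) (lt_trans hx.2 hrb)).2
    have hYval : ∀ s, 0 < s → H s / s ^ (n-1) = u' s ^ (p-1) := by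
      intro s hs0
      rw [hHdef]
      show ((s:ℝ) ^ (n-1) * u' s ^ (p-1)) / s ^ (n-1) = _
      field_simp
    simp only [hYval t ht0, hYval r hr] at hYt
    exact (Real.rpow_le_rpow_iff (hu'nn' t ht (htr.trans hrb)) (hu'nn' r hr.le hrb) hp1).1 hYt
  -- F is maximal at r on [0,r]
  have hFle : ∀ x ∈ Icc (0:ℝ) r, F x ≤ F r := by
    intro x hx
    have hxb : x < b := lt_of_le_of_lt hx.2 hrb
    have h1 : f₂ x ≤ f₂ r := hf₂.2.1 (mem_Ici.2 hx.1) (mem_Ici.2 hr.le) hx.2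
    have h2 : g₂ (v x) ≤ g₂ (v r) := hg₂.2.1 (mem_Ici.2 (hvnn x hx.1 hxb))
      (mem_Ici.2 (hvnn r hr.le hrb)) (hvmono x r hx.1 hx.2 hrb)
    have h3 : g₃ |u' x| ≤ g₃ |u' r| := by
      rw [abs_of_nonneg (hu'nn' x hx.1 hxb), abs_of_nonneg (hu'nn' r hr.le hrb)]
      exact hg₃.2.1 (mem_Ici.2 (hu'nn' x hx.1 hxb)) (mem_Ici.2 (hu'nn' r hr.le hrb))
        (hu'mono x hx.1 hx.2)
    rw [hFdef]
    show f₂ x * g₂ (v x) * g₃ |u' x| ≤ f₂ r * g₂ (v r) * g₃ |u' r|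
    apply mul_le_mul (mul_le_mul h1 h2 (B1nonneg hg₂ (hvnn x hx.1 hxb)) (B1nonneg hf₂ hr.le))
      h3 (B1nonneg hg₃ (abs_nonneg _))
      (mul_nonneg (B1nonneg hf₂ hr.le) (B1nonneg hg₂ (hvnn r hr.le hrb)))
  -- the auxiliary function for v
  set W2 : ℝ → ℝ := fun s => s ^ (n-1) * (v' s) ^ (p-1) with hW2def
  have hW2D : ∀ s ∈ Ioo (0:ℝ) b, HasDerivAt W2 (s ^ (n-1) * F s) s := by
    intro s hs
    have heq : W2 =ᶠ[𝓝 s] (fun x => x ^ (n-1) * v' x * |v' x| ^ (p-2)) := by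
      filter_upwards [Ioo_mem_nhds hs.1 hs.2] with x hx
      rw [hW2def]
      show x ^ (n-1) * v' x ^ (p-1) = x ^ (n-1) * v' x * |v' x| ^ (p-2)
      rw [mul_assoc, psign_eq hp (hv'nn x hx)]
    exact (heqvb s hs).congr_of_eventuallyEq heq
  have hW2cont : ContinuousOn W2 (Ico 0 b) :=
    (continuous_pow (n-1)).continuousOn.mul ((hcontrp (p-1) hp1).comp_continuousOn hv'cont)
  have hW20 : W2 0 = 0 := by
    rw [hW2def]
    show (0:ℝ) ^ (n-1) * v' 0 ^ (p-1) = 0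
    rw [zero_pow (by omega : n - 1 ≠ 0), zero_mul]
  have hIccr : Icc (0:ℝ) r ⊆ Ico 0 b := fun x hx => ⟨hx.1, lt_of_le_of_lt hx.2 hrb⟩
  have hint1 : IntervalIntegrable (fun x => x ^ (n-1) * F x) MeasureTheory.volume 0 r := by
    apply ContinuousOn.intervalIntegrable
    rw [uIcc_of_le hr.le]
    exact ((continuous_pow (n-1)).continuousOn).mul (hFc.mono hIccr)
  have hFTC2 : ∫ x in (0:ℝ)..r, x ^ (n-1) * F x = W2 r - W2 0 :=
    intervalIntegral.integral_eq_sub_of_hasDeriv_right_of_le hr.le (hW2cont.mono hIccr)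
      (fun x hx => (hW2D x ⟨hx.1, hx.2.trans hrb⟩).hasDerivWithinAt) hint1
  have hK0 : 0 ≤ W2 r := by
    rw [hW2def]
    show 0 ≤ r ^ (n-1) * v' r ^ (p-1)
    exact mul_nonneg (pow_nonneg hr.le _) (Real.rpow_nonneg (hv'nn r ⟨hr, hrb⟩) _)
  have hFr : 0 ≤ F r := hFnn r ⟨hr.le, hrb⟩
  have hn0 : ((n:ℝ)) ≠ 0 := by positivity
  have hKle : W2 r ≤ F r * r ^ n / n := by
    have hint2 : IntervalIntegrable (fun x => x ^ (n-1) * F r) MeasureTheory.volume 0 r := by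
      apply ContinuousOn.intervalIntegrable
      rw [uIcc_of_le hr.le]
      exact ((continuous_pow (n-1)).continuousOn).mul continuousOn_const
    have hmono2 : ∫ x in (0:ℝ)..r, x ^ (n-1) * F x ≤ ∫ x in (0:ℝ)..r, x ^ (n-1) * F r :=
      intervalIntegral.integral_mono_on hr.le hint1 hint2
        (fun x hx => mul_le_mul_of_nonneg_left (hFle x hx) (pow_nonneg hx.1 _))
    have hval2 : ∫ x in (0:ℝ)..r, x ^ (n-1) * F r = F r * r ^ n / n := by
      rw [show (fun x : ℝ => x ^ (n-1) * F r) = fun x : ℝ => F r * x ^ (n-1) from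
        by funext x; ring]
      rw [intervalIntegral.integral_const_mul, integral_pow,
        show n - 1 + 1 = n from by omega]
      rw [hcastn, zero_pow (by omega : n ≠ 0)]
      rw [show ν + 1 = (n:ℝ) from by rw [hνdef]; ring]
      ring
    have : W2 r = ∫ x in (0:ℝ)..r, x ^ (n-1) * F x := by rw [hFTC2, hW20]; ring
    rw [this]
    calc ∫ x in (0:ℝ)..r, x ^ (n-1) * F x ≤ ∫ x in (0:ℝ)..r, x ^ (n-1) * F r := hmono2
      _ = F r * r ^ n / n := hval2
  -- derivative of v'^{p-1} at r
  have hNne : (r:ℝ) ^ (n-1) ≠ 0 := (pow_pos hr _).ne'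
  have hDq := (hW2D r ⟨hr, hrb⟩).div (hasDerivAt_pow (n-1) r) hNne
  have hfinal : HasDerivAt (fun t => v' t ^ (p-1))
      ((r ^ (n-1) * F r * r ^ (n-1) - W2 r * (↑(n-1) * r ^ (n-1-1))) / ((r ^ (n-1)) ^ 2)) r := by
    apply hDq.congr_of_eventuallyEq
    filter_upwards [Ioo_mem_nhds hr hrb] with x hx
    rw [hW2def]
    show v' x ^ (p-1) = x ^ (n-1) * v' x ^ (p-1) / x ^ (n-1)
    rw [mul_comm, mul_div_assoc, div_self (pow_pos hx.1 _).ne', mul_one]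
  have hFr' : F r = f₂ r * g₂ (v r) * g₃ (u' r) := by
    rw [hFdef]
    show f₂ r * g₂ (v r) * g₃ |u' r| = _
    rw [abs_of_nonneg (hu'nn r ⟨hr, hrb⟩)]
  have hpow2 : ((r:ℝ) ^ (n-1)) ^ 2 = r ^ n * r ^ (n-2) := by
    rw [← pow_mul, ← pow_add]
    congr 1
    omega
  have hQpos : 0 < (r:ℝ) ^ (n-2) := pow_pos hr _
  have hP2 : 0 < ((r:ℝ) ^ (n-1)) ^ 2 := by positivity
  have hνn : ν + 1 = (n:ℝ) := by rw [hνdef]; ring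
  have hν0 : 0 ≤ ν := by linarith
  have hnpos : (0:ℝ) < (n:ℝ) := by
    have : (2:ℝ) ≤ (n:ℝ) := by exact_mod_cast hn
    linarith
  have hKνn : W2 r * (ν * r ^ (n-2)) * n ≤ F r * ν * ((r ^ (n-1)) ^ 2) := by
    have hKn : W2 r * (n:ℝ) ≤ F r * r ^ n := (le_div_iff₀ hnpos).1 hKle
    have h1 := mul_le_mul_of_nonneg_right hKn (mul_nonneg hν0 hQpos.le)
    calc W2 r * (ν * r ^ (n-2)) * n = W2 r * (n:ℝ) * (ν * r ^ (n-2)) := by ring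
      _ ≤ F r * r ^ n * (ν * r ^ (n-2)) := h1
      _ = F r * ν * (r ^ n * r ^ (n-2)) := by ring
      _ = F r * ν * ((r ^ (n-1)) ^ 2) := by rw [← hpow2]
  have hKQ0 : 0 ≤ W2 r * (ν * r ^ (n-2)) := mul_nonneg hK0 (mul_nonneg hν0 hQpos.le)
  have hsum2 : F r * ((r ^ (n-1)) ^ 2) * ν + F r * ((r ^ (n-1)) ^ 2)
      = F r * ((r ^ (n-1)) ^ 2) * n := by
    rw [← hνn]
    ring
  have e1 : r ^ (n-1) * F r * r ^ (n-1) = F r * ((r ^ (n-1)) ^ 2) := by ring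
  have hcast2 : (↑(n-1) : ℝ) * r ^ (n-1-1) = ν * r ^ (n-2) := by
    rw [hcastn, show n-1-1 = n-2 from by omega]
  refine ⟨_, hfinal, ?_, ?_⟩
  · -- lower bound
    rw [← hFr', hcast2, show (1:ℝ)/(n:ℝ) * F r = F r / n from by ring,
      div_le_div_iff₀ hnpos hP2]
    linarith [hKνn, hsum2, e1]
  · -- upper bound
    rw [← hFr', hcast2, div_le_iff₀ hP2]
    linarith [hKQ0, e1]
end
end

section
/- Assume hypothesis (B1) and 0 ≤ α < p − 1, and let (u,v) be a non-constant positive radial solution on B_R of the system Δ_p u = f₁(|x|)·g₁(v)·|∇u|^α, Δ_p v = f₂(|x|)·g₂(v)·g₃(|∇u|). Then u and v are convex on (0,R); equivalently, u' and v' are non-decreasing on (0,R). -/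
open Set Filter Topology

noncomputable section

lemma phi_cont (p : ℝ) (hp : 1 < p) : Continuous (fun x : ℝ => x * |x| ^ (p - 2)) := by
  have key : (fun x : ℝ => x * |x| ^ (p - 2)) =
      fun x => (max x 0) ^ (p-1) - (max (-x) 0) ^ (p-1) := by
    funext x
    rcases lt_trichotomy x 0 with h | h | h
    · have hx : max x 0 = 0 := max_eq_right h.le
      have hx2 : max (-x) 0 = -x := max_eq_left (by linarith)
      rw [hx, hx2, Real.zero_rpow (by linarith), abs_of_neg h]
      have h2 : (-x) ^ (p-1) = (-x) ^ (1:ℝ) * (-x) ^ (p-2) := by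
        rw [← Real.rpow_add (by linarith)]; congr 1; ring
      rw [h2, Real.rpow_one]; ring
    · simp [h]
    · have hx : max x 0 = x := max_eq_left h.le
      have hx2 : max (-x) 0 = 0 := max_eq_right (by linarith)
      rw [hx, hx2, Real.zero_rpow (by linarith), abs_of_pos h]
      have h2 : x ^ (p-1) = x ^ (1:ℝ) * x ^ (p-2) := by
        rw [← Real.rpow_add h]; congr 1; ring
      rw [h2, Real.rpow_one]; ring
  rw [key]
  exact ((continuous_id.max continuous_const).rpow_const (fun x => Or.inr (by linarith))).sub
    ((continuous_neg.max continuous_const).rpow_const fun x => Or.inr (by linarith))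

lemma phi_eq (p : ℝ) (hp : 1 < p) {x : ℝ} (hx : 0 ≤ x) : x * |x| ^ (p-2) = x ^ (p-1) := by
  rcases hx.eq_or_lt with h | h
  · rw [← h, Real.zero_rpow (by linarith), zero_mul]
  · rw [abs_of_pos h]
    have h2 : x ^ (p-1) = x ^ (1:ℝ) * x ^ (p-2) := by
      rw [← Real.rpow_add h]; congr 1; ring
    rw [h2, Real.rpow_one]

lemma phi_nonneg_iff (p : ℝ) (hp : 1 < p) {x : ℝ} (h : 0 ≤ x * |x| ^ (p-2)) : 0 ≤ x := by
  by_contra hx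
  push_neg at hx
  have : x * |x| ^ (p-2) < 0 :=
    mul_neg_of_neg_of_pos hx (Real.rpow_pos_of_pos (abs_pos.2 hx.ne) _)
  linarith


def Dset (R : EReal) : Set ℝ := {r : ℝ | 0 < r ∧ (r : EReal) < R}
def Sset (R : EReal) : Set ℝ := {r : ℝ | 0 ≤ r ∧ (r : EReal) < R}

lemma Uopen (R : EReal) : IsOpen {r : ℝ | (r : EReal) < R} :=
  isOpen_Iio.preimage continuous_coe_real_ereal

lemma Udown (R : EReal) {x y : ℝ} (hxy : x ≤ y) (hy : (y : EReal) < R) : (x : EReal) < R :=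
  lt_of_le_of_lt (EReal.coe_le_coe_iff.2 hxy) hy

lemma Dset_open (R : EReal) : IsOpen (Dset R) := by
  have : Dset R = Ioi 0 ∩ {r : ℝ | (r : EReal) < R} := rfl
  rw [this]; exact isOpen_Ioi.inter (Uopen R)

lemma Sset_interior (R : EReal) : interior (Sset R) = Dset R := by
  have h : Sset R = Ici 0 ∩ {r : ℝ | (r : EReal) < R} := rfl
  rw [h, interior_inter, interior_Ici, (Uopen R).interior_eq]; rfl

lemma Sset_convex (R : EReal) : Convex ℝ (Sset R) := by
  rw [convex_iff_ordConnected]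
  constructor
  intro x hx y hy z hz
  exact ⟨le_trans hx.1 hz.1, Udown R hz.2 hy.2⟩

lemma Dset_convex (R : EReal) : Convex ℝ (Dset R) := by
  rw [convex_iff_ordConnected]
  constructor
  intro x hx y hy z hz
  exact ⟨lt_of_lt_of_le hx.1 hz.1, Udown R hz.2 hy.2⟩

lemma Dset_subset_Sset (R : EReal) : Dset R ⊆ Sset R := fun r hr => ⟨hr.1.le, hr.2⟩

lemma mono_of_hasDerivAt {T : Set ℝ} (hT : Convex ℝ T) {f f' : ℝ → ℝ}
    (hc : ContinuousOn f T) (hd : ∀ r ∈ interior T, HasDerivAt f (f' r) r)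
    (h0 : ∀ r ∈ interior T, 0 ≤ f' r) : MonotoneOn f T :=
  monotoneOn_of_deriv_nonneg hT hc
    (fun r hr => ((hd r hr).differentiableAt).differentiableWithinAt)
    (fun r hr => by rw [(hd r hr).deriv]; exact h0 r hr)

lemma key (n : ℕ) (hn : 2 ≤ n) (R : EReal) (hR : (0:EReal) < R)
    (β : ℝ) (hβ0 : 0 ≤ β) (hβ1 : β < 1)
    (W z c : ℝ → ℝ)
    (hWz : ∀ r ∈ Dset R, W r = r ^ (n-1) * z r)
    (hz0 : ∀ r ∈ Dset R, 0 ≤ z r)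
    (hW' : ∀ r ∈ Dset R, HasDerivAt W (r ^ (n-1) * (c r * z r ^ β)) r)
    (hc : MonotoneOn c (Sset R)) (hc0 : ∀ r ∈ Sset R, 0 ≤ c r)
    (hWc : ContinuousOn W (Sset R)) (hW0 : W 0 = 0) :
    MonotoneOn z (Dset R) := by
  obtain ⟨k, hk⟩ : ∃ k, n - 1 = k + 1 := ⟨n - 2, by omega⟩
  set m : ℕ := n - 1 with hmdef
  have hm1 : 1 ≤ m := by omega
  have hmR : (1:ℝ) ≤ (m:ℝ) := by exact_mod_cast hm1
  have h1β : 0 < 1 - β := by linarith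
  obtain ⟨M, hM⟩ : ∃ M : ℝ, M = (m : ℝ) * (1 - β) := ⟨_, rfl⟩
  have hM0 : 0 < M := by rw [hM]; nlinarith
  have h0S : (0:ℝ) ∈ Sset R := ⟨le_refl 0, by simpa using hR⟩
  -- W is monotone and nonnegative on Sset
  have hWmono : MonotoneOn W (Sset R) := by
    refine mono_of_hasDerivAt (Sset_convex R) hWc
      (f' := fun r => r ^ m * (c r * z r ^ β)) ?_ ?_
    · intro r hr; rw [Sset_interior] at hr; exact hW' r hr
    · intro r hr; rw [Sset_interior] at hr
      exact mul_nonneg (pow_nonneg hr.1.le _)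
        (mul_nonneg (hc0 r (Dset_subset_Sset R hr)) (Real.rpow_nonneg (hz0 r hr) _))
  have hWnn : ∀ r ∈ Sset R, 0 ≤ W r := by
    intro r hr
    have := hWmono h0S hr hr.1
    rwa [hW0] at this
  -- z has a derivative on Dset
  have hz' : ∀ r ∈ Dset R, HasDerivAt z (c r * z r ^ β - (m:ℝ) * z r / r) r := by
    intro r hr
    have hr0 : (0:ℝ) < r := hr.1
    have hpow : r ^ m ≠ 0 := pow_ne_zero _ hr0.ne'
    have hdiv : HasDerivAt (fun t => W t / t ^ m)
        ((r ^ m * (c r * z r ^ β) * r ^ m - W r * ((m:ℝ) * r ^ (m-1))) / (r ^ m) ^ 2) r :=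
      (hW' r hr).div (hasDerivAt_pow m r) hpow
    have heq : (fun t => W t / t ^ m) =ᶠ[𝓝 r] z := by
      filter_upwards [(Dset_open R).mem_nhds hr] with t ht
      rw [hWz t ht]
      have : t ^ m ≠ 0 := pow_ne_zero _ ht.1.ne'
      field_simp
    have hdz := hdiv.congr_of_eventuallyEq heq.symm
    refine hdz.congr_deriv ?_
    rw [hWz r hr, hk, Nat.add_sub_cancel, pow_succ]
    have hrne : r ≠ 0 := hr0.ne'
    field_simp
  -- the key estimate
  have hest : ∀ r ∈ Dset R, 0 < W r → (m:ℝ) * z r / r ≤ c r * z r ^ β := by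
    intro r hr hWr
    have hr0 : (0:ℝ) < r := hr.1
    have hrS : r ∈ Sset R := Dset_subset_Sset R hr
    have hIccS : Icc (0:ℝ) r ⊆ Sset R := fun t ht => ⟨ht.1, Udown R ht.2 hr.2⟩
    set K := {t ∈ Icc (0:ℝ) r | W t = 0} with hK
    have hKne : K.Nonempty := ⟨0, ⟨le_refl 0, hr0.le⟩, hW0⟩
    have hKcl : IsClosed K :=
      (hWc.mono hIccS).preimage_isClosed_of_isClosed isClosed_Icc isClosed_singleton
    have hKcp : IsCompact K := isCompact_Icc.of_isClosed_subset hKcl (sep_subset _ _)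
    obtain ⟨ρ, hρ⟩ : ∃ ρ, ρ = sSup K := ⟨_, rfl⟩
    have hρK : ρ ∈ K := hρ ▸ hKcp.sSup_mem hKne
    have hρ0 : 0 ≤ ρ := hρK.1.1
    have hWρ : W ρ = 0 := hρK.2
    have hρr : ρ < r := lt_of_le_of_ne hρK.1.2 (by rintro rfl; rw [hWρ] at hWr; linarith)
    have hKbdd : BddAbove K := ⟨r, fun x hx => hx.1.2⟩
    have hWpos : ∀ t : ℝ, ρ < t → t ≤ r → 0 < W t := by
      intro t h1 h2
      have ht0 : 0 ≤ t := hρ0.trans h1.le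
      have htS : t ∈ Sset R := hIccS ⟨ht0, h2⟩
      rcases (hWnn t htS).eq_or_lt with h | h
      · exfalso
        have htK : t ∈ K := ⟨⟨ht0, h2⟩, h.symm⟩
        have := le_csSup hKbdd htK
        rw [← hρ] at this
        linarith
      · exact h
    set G : ℝ → ℝ := fun t => W t ^ (1 - β) with hG
    set H : ℝ → ℝ := fun t => (1 - β) * c r * (t ^ (M + 1) / (M + 1)) with hH
    have hG' : ∀ t : ℝ, ρ < t → t ≤ r → HasDerivAt G ((1 - β) * (c t * t ^ M)) t := by
      intro t h1 h2
      have ht0 : 0 < t := lt_of_le_of_lt hρ0 h1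
      have htD : t ∈ Dset R := ⟨ht0, Udown R h2 hr.2⟩
      have hWt : 0 < W t := hWpos t h1 h2
      have hder := (hW' t htD).rpow_const (p := 1 - β) (Or.inl hWt.ne')
      convert hder using 1
      have e1' : z t = W t * t ^ (-(m:ℝ)) := by
        rw [hWz t htD, Real.rpow_neg ht0.le, Real.rpow_natCast]
        field_simp
      have e2 : z t ^ β = W t ^ β * t ^ (-(m:ℝ) * β) := by
        rw [e1', Real.mul_rpow hWt.le (Real.rpow_nonneg ht0.le _), ← Real.rpow_mul ht0.le]
      rw [e2, ← Real.rpow_natCast t m]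
      have eq1 : t ^ (m:ℝ) * t ^ (-(m:ℝ) * β) = t ^ M := by
        rw [← Real.rpow_add ht0]; congr 1; rw [hM]; ring
      have eq2 : W t ^ β * W t ^ (1 - β - 1) = 1 := by
        rw [← Real.rpow_add hWt, show β + (1 - β - 1) = 0 by ring, Real.rpow_zero]
      linear_combination (-((1-β) * c t * (W t ^ β * W t ^ (1-β-1)))) * eq1 +
        (-((1-β) * c t * t ^ M)) * eq2
    have hH' : ∀ t : ℝ, 0 < t → HasDerivAt H ((1 - β) * c r * t ^ M) t := by
      intro t ht
      have h := (Real.hasDerivAt_rpow_const (p := M + 1) (Or.inl ht.ne')).div_const (M + 1)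
      have h2 := h.const_mul ((1 - β) * c r)
      refine h2.congr_deriv ?_
      have hM1 : M + 1 ≠ 0 := by linarith
      rw [show M + 1 - 1 = M by ring, mul_div_cancel_left₀ _ hM1]
    have hGr : ∀ s ∈ Ioo ρ r, G r - H r ≤ G s := by
      intro s hs
      have hs0 : 0 < s := lt_of_le_of_lt hρ0 hs.1
      have hIccsub : Icc s r ⊆ Sset R := fun t ht => hIccS ⟨hs0.le.trans ht.1, ht.2⟩
      have hmono : MonotoneOn (fun t => H t - G t) (Icc s r) := by
        refine mono_of_hasDerivAt (convex_Icc s r)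
          (f' := fun t => (1 - β) * c r * t ^ M - (1 - β) * (c t * t ^ M)) ?_ ?_ ?_
        · refine ContinuousOn.sub ?_ ?_
          · exact (continuousOn_const.mul
              ((continuousOn_id.rpow_const fun x _ => Or.inr (by linarith)).div_const _))
          · exact (hWc.mono hIccsub).rpow_const fun x _ => Or.inr h1β.le
        · intro t ht; rw [interior_Icc] at ht
          exact (hH' t (hs0.trans ht.1)).sub (hG' t (hs.1.trans ht.1) ht.2.le)
        · intro t ht; rw [interior_Icc] at ht
          have hts : t ∈ Sset R := hIccsub ⟨ht.1.le, ht.2.le⟩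
          have hcc : c t ≤ c r := hc hts hrS ht.2.le
          have htM : 0 ≤ t ^ M := Real.rpow_nonneg (hs0.trans ht.1).le M
          show 0 ≤ (1 - β) * c r * t ^ M - (1 - β) * (c t * t ^ M)
          nlinarith [mul_nonneg (sub_nonneg.2 hcc) htM]
      have h1 := hmono (left_mem_Icc.2 hs.2.le) (right_mem_Icc.2 hs.2.le) hs.2.le
      have hHs : 0 ≤ H s := by
        have h2 : 0 ≤ c r := hc0 r hrS
        have h3 : 0 ≤ s ^ (M+1) := Real.rpow_nonneg hs0.le _
        have h4 : 0 < M + 1 := by linarith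
        rw [hH]
        positivity
      simp only [hG, hH] at h1 hHs ⊢
      linarith
    have hGρlim : Tendsto G (𝓝[Ioo ρ r] ρ) (𝓝 0) := by
      have hρS : ρ ∈ Sset R := hIccS ⟨hρ0, hρr.le⟩
      have hGc : ContinuousWithinAt G (Sset R) ρ :=
        (hWc.rpow_const fun x _ => Or.inr h1β.le) ρ hρS
      have h2 : G ρ = 0 := by rw [hG]; simp only; rw [hWρ, Real.zero_rpow h1β.ne']
      have h3 := (hGc.mono (fun t (ht : t ∈ Ioo ρ r) => hIccS ⟨hρ0.trans ht.1.le, ht.2.le⟩))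
      rw [ContinuousWithinAt, h2] at h3
      exact h3
    have hne : (𝓝[Ioo ρ r] ρ).NeBot := by
      rw [← mem_closure_iff_nhdsWithin_neBot, closure_Ioo hρr.ne]
      exact ⟨le_refl ρ, hρr.le⟩
    have hGH : G r - H r ≤ 0 :=
      ge_of_tendsto hGρlim (eventually_of_mem self_mem_nhdsWithin hGr)
    -- now the final estimate
    have hzr : 0 < z r := by
      have h1 := hWz r hr
      have h2 : 0 < r ^ m := pow_pos hr0 m
      have h3 : 0 < r ^ m * z r := h1 ▸ hWr
      by_contra hle
      push_neg at hle
      nlinarith [mul_nonneg h2.le (neg_nonneg.2 hle)]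
    have e1' : z r = W r * r ^ (-(m:ℝ)) := by
      rw [hWz r hr, Real.rpow_neg hr0.le, Real.rpow_natCast]
      field_simp
    have e3 : z r ^ (1 - β) = G r * r ^ (-M) := by
      rw [e1', Real.mul_rpow (hWnn r hrS) (Real.rpow_nonneg hr0.le _),
        ← Real.rpow_mul hr0.le]
      rw [hG]
      congr 2
      rw [hM]; ring
    have e4 : z r ^ (1 - β) ≤ (1 - β) * c r * r / (M + 1) := by
      have h5 : 0 ≤ r ^ (-M) := Real.rpow_nonneg hr0.le _
      have h6 : G r * r ^ (-M) ≤ H r * r ^ (-M) :=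
        mul_le_mul_of_nonneg_right (by linarith) h5
      have h9 : r ^ (M + 1) = r ^ M * r := by rw [Real.rpow_add hr0, Real.rpow_one]
      have h7 : r ^ M * r ^ (-M) = 1 := by
        rw [← Real.rpow_add hr0, add_neg_cancel, Real.rpow_zero]
      have h10 : H r * r ^ (-M) = (1 - β) * c r * r / (M + 1) := by
        show (1 - β) * c r * (r ^ (M + 1) / (M + 1)) * r ^ (-M) = _
        rw [h9]
        linear_combination ((1 - β) * c r * r / (M + 1)) * h7
      rw [e3]
      rw [h10] at h6
      exact h6
    have e5 : z r = z r ^ β * z r ^ (1 - β) := by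
      rw [← Real.rpow_add hzr, show β + (1 - β) = 1 by ring, Real.rpow_one]
    have e6 : (m:ℝ) * z r ^ (1 - β) ≤ c r * r := by
      have hcr0 : 0 ≤ c r := hc0 r hrS
      have h8 : (0:ℝ) < M + 1 := by linarith
      have h7 : (m:ℝ) * ((1 - β) * c r * r / (M + 1)) ≤ c r * r := by
        have hMc : (m:ℝ) * ((1 - β) * c r * r / (M + 1)) = M * (c r * r) / (M + 1) := by
          rw [hM]; ring
        rw [hMc, div_le_iff₀ h8]
        nlinarith [mul_nonneg hcr0 hr0.le]
      calc (m:ℝ) * z r ^ (1 - β) ≤ (m:ℝ) * ((1 - β) * c r * r / (M + 1)) := by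
            apply mul_le_mul_of_nonneg_left e4 (by linarith)
        _ ≤ c r * r := h7
    rw [div_le_iff₀ hr0]
    calc (m:ℝ) * z r = z r ^ β * ((m:ℝ) * z r ^ (1 - β)) := by
          nth_rewrite 1 [e5]; ring
      _ ≤ z r ^ β * (c r * r) :=
          mul_le_mul_of_nonneg_left e6 (Real.rpow_nonneg hzr.le β)
      _ = c r * z r ^ β * r := by ring
  -- conclude monotonicity of z
  intro x hx y hy hxy
  rcases (hWnn x (Dset_subset_Sset R hx)).eq_or_lt with hWx | hWx
  · have hzx : z x = 0 := by
      have h1 := hWz x hx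
      have h2 : x ^ m ≠ 0 := pow_ne_zero _ hx.1.ne'
      rw [← hWx] at h1
      rcases mul_eq_zero.mp h1.symm with h | h
      · exact absurd h h2
      · exact h
    rw [hzx]; exact hz0 y hy
  · have hIccD : Icc x y ⊆ Dset R := fun t ht => ⟨hx.1.trans_le ht.1, Udown R ht.2 hy.2⟩
    have hmono : MonotoneOn z (Icc x y) := by
      refine mono_of_hasDerivAt (convex_Icc x y)
        (f' := fun t => c t * z t ^ β - (m:ℝ) * z t / t) ?_ ?_ ?_
      · -- continuity of z on Icc x y
        refine ContinuousOn.congr (f := fun t => W t / t ^ m) ?_ ?_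
        · exact (hWc.mono fun t ht => Dset_subset_Sset R (hIccD ht)).div
            (continuousOn_pow m) (fun t ht => pow_ne_zero _ (hx.1.trans_le ht.1).ne')
        · intro t ht
          show z t = W t / t ^ m
          rw [hWz t (hIccD ht)]
          have : t ^ m ≠ 0 := pow_ne_zero _ (hx.1.trans_le ht.1).ne'
          field_simp
      · intro t ht; rw [interior_Icc] at ht
        exact hz' t (hIccD ⟨ht.1.le, ht.2.le⟩)
      · intro t ht; rw [interior_Icc] at ht
        have htD : t ∈ Dset R := hIccD ⟨ht.1.le, ht.2.le⟩
        have hWt : 0 < W t := hWx.trans_le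
          (hWmono (Dset_subset_Sset R hx) (Dset_subset_Sset R htD) ht.1.le)
        have := hest t htD hWt
        linarith
    exact hmono (left_mem_Icc.2 hxy) (right_mem_Icc.2 hxy) hxy

lemma nn_of_mul {a b : ℝ} (ha : 0 < a) (h : 0 ≤ a * b) : 0 ≤ b := by
  by_contra hb
  push_neg at hb
  nlinarith

/-- Lemma 2.3 (Convexity): u and v are convex on (0,R); equivalently u', v' are
non-decreasing on (0,R). -/
theorem convexity_of_solutions
    (n : ℕ) (hn : 2 ≤ n) (p α : ℝ) (hp : 1 < p) (hα0 : 0 ≤ α) (hα : α < p - 1)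
    (f₁ f₂ g₁ g₂ g₃ : ℝ → ℝ)
    (hf₁ : B1cond f₁) (hf₂ : B1cond f₂) (hg₁ : B1cond g₁) (hg₂ : B1cond g₂) (hg₃ : B1cond g₃)
    (R : EReal) (hR : 0 < R) (u v u' v' : ℝ → ℝ)
    (hsol : RadialSol n p α f₁ f₂ g₁ g₂ g₃ R u v u' v')
    (hunc : NonConstOn R u) (hvnc : NonConstOn R v) :
    ConvexOn ℝ {r : ℝ | 0 < r ∧ (r : EReal) < R} u ∧
    ConvexOn ℝ {r : ℝ | 0 < r ∧ (r : EReal) < R} v ∧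
    MonotoneOn u' {r : ℝ | 0 < r ∧ (r : EReal) < R} ∧
    MonotoneOn v' {r : ℝ | 0 < r ∧ (r : EReal) < R} := by
  obtain ⟨hu, hv, hu'c, hv'c, hu'0, hv'0, hupos, hvpos, hequ, heqv⟩ := hsol
  have hp1 : (0:ℝ) < p - 1 := by linarith
  have hDS := Dset_subset_Sset R
  have h0S : (0:ℝ) ∈ Sset R := ⟨le_refl 0, by simpa using hR⟩
  have hm0 : n - 1 ≠ 0 := by omega
  -- upgraded derivatives
  have huAt : ∀ r ∈ Dset R, HasDerivAt u (u' r) r := fun r hr =>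
    (hu r hr.1.le hr.2).hasDerivAt (Ici_mem_nhds hr.1)
  have hvAt : ∀ r ∈ Dset R, HasDerivAt v (v' r) r := fun r hr =>
    (hv r hr.1.le hr.2).hasDerivAt (Ici_mem_nhds hr.1)
  -- z and W functions
  set zu : ℝ → ℝ := fun t => u' t * |u' t| ^ (p - 2) with hzudef
  set zv : ℝ → ℝ := fun t => v' t * |v' t| ^ (p - 2) with hzvdef
  set Wu : ℝ → ℝ := fun t => t ^ (n - 1) * zu t with hWudef
  set Wv : ℝ → ℝ := fun t => t ^ (n - 1) * zv t with hWvdef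
  have hequ' : ∀ r ∈ Dset R,
      HasDerivAt Wu (r ^ (n - 1) * (f₁ r * g₁ (v r) * |u' r| ^ α)) r := by
    intro r hr
    have h := hequ r hr.1 hr.2
    have heqf : (fun t : ℝ => t ^ (n - 1) * u' t * |u' t| ^ (p - 2)) = Wu := by
      funext t; rw [hWudef]; ring
    rwa [heqf] at h
  have heqv' : ∀ r ∈ Dset R,
      HasDerivAt Wv (r ^ (n - 1) * (f₂ r * g₂ (v r) * g₃ (|u' r|))) r := by
    intro r hr
    have h := heqv r hr.1 hr.2
    have heqf : (fun t : ℝ => t ^ (n - 1) * v' t * |v' t| ^ (p - 2)) = Wv := by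
      funext t; rw [hWvdef]; ring
    rwa [heqf] at h
  -- continuity of Wu, Wv on Sset
  have hzuc : ContinuousOn zu (Sset R) := (phi_cont p hp).comp_continuousOn hu'c
  have hzvc : ContinuousOn zv (Sset R) := (phi_cont p hp).comp_continuousOn hv'c
  have hWuc : ContinuousOn Wu (Sset R) := (continuous_pow (n-1)).continuousOn.mul hzuc
  have hWvc : ContinuousOn Wv (Sset R) := (continuous_pow (n-1)).continuousOn.mul hzvc
  have hWu0 : Wu 0 = 0 := by rw [hWudef]; simp [zero_pow hm0]
  have hWv0 : Wv 0 = 0 := by rw [hWvdef]; simp [zero_pow hm0]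
  -- nonnegativity of right-hand sides
  have hFu : ∀ r ∈ Dset R, 0 ≤ f₁ r * g₁ (v r) * |u' r| ^ α := fun r hr =>
    mul_nonneg (mul_nonneg (hf₁.2.2 r hr.1).le (hg₁.2.2 _ (hvpos r hr.1 hr.2)).le)
      (Real.rpow_nonneg (abs_nonneg _) _)
  have hFv : ∀ r ∈ Dset R, 0 ≤ f₂ r * g₂ (v r) * g₃ (|u' r|) := fun r hr =>
    mul_nonneg (mul_nonneg (hf₂.2.2 r hr.1).le (hg₂.2.2 _ (hvpos r hr.1 hr.2)).le)
      (hg₃.nonneg (abs_nonneg _))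
  -- Wu, Wv monotone, nonneg
  have hWumono : MonotoneOn Wu (Sset R) := by
    refine mono_of_hasDerivAt (Sset_convex R) hWuc
      (f' := fun r => r ^ (n-1) * (f₁ r * g₁ (v r) * |u' r| ^ α)) ?_ ?_
    · intro r hr; rw [Sset_interior] at hr; exact hequ' r hr
    · intro r hr; rw [Sset_interior] at hr
      exact mul_nonneg (pow_nonneg hr.1.le _) (hFu r hr)
  have hWvmono : MonotoneOn Wv (Sset R) := by
    refine mono_of_hasDerivAt (Sset_convex R) hWvc
      (f' := fun r => r ^ (n-1) * (f₂ r * g₂ (v r) * g₃ (|u' r|))) ?_ ?_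
    · intro r hr; rw [Sset_interior] at hr; exact heqv' r hr
    · intro r hr; rw [Sset_interior] at hr
      exact mul_nonneg (pow_nonneg hr.1.le _) (hFv r hr)
  have hWunn : ∀ r ∈ Sset R, 0 ≤ Wu r := fun r hr => by
    have := hWumono h0S hr hr.1; rwa [hWu0] at this
  have hWvnn : ∀ r ∈ Sset R, 0 ≤ Wv r := fun r hr => by
    have := hWvmono h0S hr hr.1; rwa [hWv0] at this
  -- u', v' nonneg on Sset
  have hu'nn : ∀ r ∈ Sset R, 0 ≤ u' r := by
    intro r hr
    rcases hr.1.eq_or_lt with h | h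
    · rw [← h, hu'0]
    · exact phi_nonneg_iff p hp (nn_of_mul (pow_pos h (n-1)) (hWunn r hr))
  have hv'nn : ∀ r ∈ Sset R, 0 ≤ v' r := by
    intro r hr
    rcases hr.1.eq_or_lt with h | h
    · rw [← h, hv'0]
    · exact phi_nonneg_iff p hp (nn_of_mul (pow_pos h (n-1)) (hWvnn r hr))
  have hzunn : ∀ r ∈ Dset R, 0 ≤ zu r := fun r hr =>
    mul_nonneg (hu'nn r (hDS hr)) (Real.rpow_nonneg (abs_nonneg _) _)
  have hzvnn : ∀ r ∈ Dset R, 0 ≤ zv r := fun r hr =>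
    mul_nonneg (hv'nn r (hDS hr)) (Real.rpow_nonneg (abs_nonneg _) _)
  -- v monotone and nonneg on Sset
  have hvconts : ContinuousOn v (Sset R) := fun r hr =>
    ((hv r hr.1 hr.2).continuousWithinAt).mono (fun t (ht : t ∈ Sset R) => ht.1)
  have hvmono : MonotoneOn v (Sset R) := by
    refine mono_of_hasDerivAt (Sset_convex R) hvconts (f' := v') ?_ ?_
    · intro r hr; rw [Sset_interior] at hr; exact hvAt r hr
    · intro r hr; rw [Sset_interior] at hr; exact hv'nn r (hDS hr)
  obtain ⟨ε, hε0, hεsub⟩ : ∃ ε > 0, Ioo (0:ℝ) ε ⊆ Dset R := by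
    rcases eq_or_ne R ⊤ with rfl | hne
    · exact ⟨1, one_pos, fun t ht => ⟨ht.1, EReal.coe_lt_top t⟩⟩
    · have hbot : R ≠ ⊥ := by rintro rfl; simp at hR
      have hRx : R = ((R.toReal : ℝ) : EReal) := (EReal.coe_toReal hne hbot).symm
      refine ⟨R.toReal, ?_, fun t ht => ⟨ht.1, ?_⟩⟩
      · have := hR; rw [hRx] at this; exact_mod_cast this
      · rw [hRx]; exact_mod_cast ht.2
  have hv00 : 0 ≤ v 0 := by
    have hcw : ContinuousWithinAt v (Ici 0) 0 :=
      (hv 0 le_rfl (by simpa using hR)).continuousWithinAt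
    have ht : Tendsto v (𝓝[Ioo (0:ℝ) ε] 0) (𝓝 (v 0)) :=
      hcw.tendsto.mono_left (nhdsWithin_mono _ (fun t ht => ht.1.le))
    have hne : (𝓝[Ioo (0:ℝ) ε] 0).NeBot := by
      rw [← mem_closure_iff_nhdsWithin_neBot, closure_Ioo hε0.ne]
      exact ⟨le_rfl, hε0.le⟩
    exact ge_of_tendsto ht (eventually_of_mem self_mem_nhdsWithin
      (fun t ht' => (hvpos t ht'.1 (hεsub ht').2).le))
  have hvnn : ∀ r ∈ Sset R, 0 ≤ v r := fun r hr => hv00.trans (hvmono h0S hr hr.1)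
  -- c₁ and the key lemma for u
  set c₁ : ℝ → ℝ := fun r => f₁ r * g₁ (v r) with hc₁def
  have hc₁m : MonotoneOn c₁ (Sset R) := by
    intro x hx y hy hxy
    exact mul_le_mul (hf₁.2.1 hx.1 hy.1 hxy)
      (hg₁.2.1 (hvnn x hx) (hvnn y hy) (hvmono hx hy hxy))
      (hg₁.nonneg (hvnn x hx)) (hf₁.nonneg hy.1)
  have hc₁0 : ∀ r ∈ Sset R, 0 ≤ c₁ r := fun r hr =>
    mul_nonneg (hf₁.nonneg hr.1) (hg₁.nonneg (hvnn r hr))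
  have hβ0 : 0 ≤ α / (p - 1) := div_nonneg hα0 hp1.le
  have hβ1 : α / (p - 1) < 1 := (div_lt_one hp1).2 hα
  have habs : ∀ r ∈ Dset R, |u' r| ^ α = zu r ^ (α / (p - 1)) := by
    intro r hr
    have h := hu'nn r (hDS hr)
    rw [hzudef]
    show |u' r| ^ α = (u' r * |u' r| ^ (p - 2)) ^ (α / (p - 1))
    rw [phi_eq p hp h, ← Real.rpow_mul h, abs_of_nonneg h]
    congr 1
    field_simp
  have hWu' : ∀ r ∈ Dset R,
      HasDerivAt Wu (r ^ (n-1) * (c₁ r * zu r ^ (α / (p - 1)))) r := by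
    intro r hr
    have h := hequ' r hr
    rw [habs r hr] at h
    exact h
  have hzumono : MonotoneOn zu (Dset R) :=
    key n hn R hR (α / (p-1)) hβ0 hβ1 Wu zu c₁ (fun r _ => rfl) hzunn hWu' hc₁m hc₁0 hWuc hWu0
  have hu'mono : MonotoneOn u' (Dset R) := by
    intro x hx y hy hxy
    by_contra hlt
    push_neg at hlt
    have h1 := hzumono hx hy hxy
    have hy0 : 0 ≤ u' y := hu'nn y (hDS hy)
    have h2 : zu y < zu x := by
      show u' y * |u' y| ^ (p - 2) < u' x * |u' x| ^ (p - 2)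
      rw [phi_eq p hp hy0, phi_eq p hp (hy0.trans hlt.le)]
      exact Real.rpow_lt_rpow hy0 hlt hp1
    linarith
  have hu'monoS : MonotoneOn u' (Sset R) := by
    intro x hx y hy hxy
    rcases hx.1.eq_or_lt with h | h
    · rw [← h, hu'0]; exact hu'nn y hy
    · exact hu'mono ⟨h, hx.2⟩ ⟨h.trans_le hxy, hy.2⟩ hxy
  -- c₂ and the key lemma for v
  set c₂ : ℝ → ℝ := fun r => f₂ r * g₂ (v r) * g₃ (|u' r|) with hc₂def
  have hc₂m : MonotoneOn c₂ (Sset R) := by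
    intro x hx y hy hxy
    have hux := hu'nn x hx
    have huy := hu'nn y hy
    have h3 : g₃ (|u' x|) ≤ g₃ (|u' y|) := by
      rw [abs_of_nonneg hux, abs_of_nonneg huy]
      exact hg₃.2.1 hux huy (hu'monoS hx hy hxy)
    have h12 : f₂ x * g₂ (v x) ≤ f₂ y * g₂ (v y) :=
      mul_le_mul (hf₂.2.1 hx.1 hy.1 hxy)
        (hg₂.2.1 (hvnn x hx) (hvnn y hy) (hvmono hx hy hxy))
        (hg₂.nonneg (hvnn x hx)) (hf₂.nonneg hy.1)
    exact mul_le_mul h12 h3 (hg₃.nonneg (abs_nonneg _))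
      (mul_nonneg (hf₂.nonneg hy.1) (hg₂.nonneg (hvnn y hy)))
  have hc₂0 : ∀ r ∈ Sset R, 0 ≤ c₂ r := fun r hr =>
    mul_nonneg (mul_nonneg (hf₂.nonneg hr.1) (hg₂.nonneg (hvnn r hr)))
      (hg₃.nonneg (abs_nonneg _))
  have hWv' : ∀ r ∈ Dset R, HasDerivAt Wv (r ^ (n-1) * (c₂ r * zv r ^ (0:ℝ))) r := by
    intro r hr
    have h := heqv' r hr
    rw [Real.rpow_zero, mul_one]
    exact h
  have hzvmono : MonotoneOn zv (Dset R) :=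
    key n hn R hR 0 le_rfl zero_lt_one Wv zv c₂ (fun r _ => rfl) hzvnn hWv' hc₂m hc₂0 hWvc hWv0
  have hv'mono : MonotoneOn v' (Dset R) := by
    intro x hx y hy hxy
    by_contra hlt
    push_neg at hlt
    have h1 := hzvmono hx hy hxy
    have hy0 : 0 ≤ v' y := hv'nn y (hDS hy)
    have h2 : zv y < zv x := by
      show v' y * |v' y| ^ (p - 2) < v' x * |v' x| ^ (p - 2)
      rw [phi_eq p hp hy0, phi_eq p hp (hy0.trans hlt.le)]
      exact Real.rpow_lt_rpow hy0 hlt hp1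
    linarith
  -- convexity
  have hDint : interior (Dset R) = Dset R := (Dset_open R).interior_eq
  have hucontD : ContinuousOn u (Dset R) := fun r hr =>
    ((huAt r hr).continuousAt).continuousWithinAt
  have hvcontD : ContinuousOn v (Dset R) := fun r hr =>
    ((hvAt r hr).continuousAt).continuousWithinAt
  have hconvu : ConvexOn ℝ (Dset R) u := by
    refine MonotoneOn.convexOn_of_deriv (Dset_convex R) hucontD ?_ ?_
    · rw [hDint]; exact fun r hr => (huAt r hr).differentiableAt.differentiableWithinAt
    · rw [hDint]; intro a ha b hb hab
      rw [(huAt a ha).deriv, (huAt b hb).deriv]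
      exact hu'mono ha hb hab
  have hconvv : ConvexOn ℝ (Dset R) v := by
    refine MonotoneOn.convexOn_of_deriv (Dset_convex R) hvcontD ?_ ?_
    · rw [hDint]; exact fun r hr => (hvAt r hr).differentiableAt.differentiableWithinAt
    · rw [hDint]; intro a ha b hb hab
      rw [(hvAt a ha).deriv, (hvAt b hb).deriv]
      exact hv'mono ha hb hab
  exact ⟨hconvu, hconvv, hu'mono, hv'mono⟩
end
end

section
/- Assume hypothesis (B1) and 0 ≤ α < p − 1, let δ = (n−1)(p−1−α)/(p−1), and let (u,v) be a non-constant positive radial solution on B_R of the system Δ_p u = f₁(|x|)·g₁(v)·|∇u|^α, Δ_p v = f₂(|x|)·g₂(v)·g₃(|∇u|). Then for all 0 < r < R, (1/r)·u'(r)^{p−1−α} ≤ (δ/((n−1)(δ+1)))·f₁(r)·g₁(v(r)). -/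
open Set Filter Topology

noncomputable section

lemma cont_mul_abs_rpow (p : ℝ) (hp : 1 < p) :
    Continuous fun s : ℝ => s * |s| ^ (p - 2) := by
  rw [continuous_iff_continuousAt]
  intro x
  rcases eq_or_ne x 0 with rfl | hx
  · have key : Tendsto (fun s : ℝ => s * |s| ^ (p - 2)) (𝓝 0) (𝓝 0) := by
      apply squeeze_zero_norm (a := fun s : ℝ => |s| ^ (p - 1))
      · intro s
        rcases eq_or_ne s 0 with rfl | hs
        · simp [Real.zero_rpow (by linarith : p - 1 ≠ 0)]
        · have habs : (0:ℝ) < |s| := abs_pos.2 hs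
          have heq : ‖s * |s| ^ (p - 2)‖ = |s| * |s| ^ (p - 2) := by
            rw [Real.norm_eq_abs, abs_mul, abs_of_nonneg (Real.rpow_nonneg (abs_nonneg s) _)]
          rw [heq, show p - 1 = 1 + (p - 2) by ring, Real.rpow_add habs, Real.rpow_one]
      · have h2 : ContinuousAt (fun y : ℝ => y ^ (p - 1)) |(0:ℝ)| := by
          simpa using Real.continuousAt_rpow_const 0 (p - 1) (Or.inr (by linarith))
        have h3 := h2.comp continuous_abs.continuousAt
        have h5 : ((0:ℝ)) ^ (p - 1) = 0 := Real.zero_rpow (by linarith)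
        rw [ContinuousAt] at h3
        simp only [Function.comp, abs_zero, h5] at h3
        exact h3
    have h0 : (fun s : ℝ => s * |s| ^ (p - 2)) 0 = 0 := by simp
    unfold ContinuousAt
    rw [h0]
    exact key
  · have h1 : ContinuousAt (fun s : ℝ => |s| ^ (p - 2)) x :=
      ContinuousAt.rpow_const continuous_abs.continuousAt (Or.inl (abs_ne_zero.2 hx))
    exact continuousAt_id.mul h1

/-- Key abstract lemma: given a "flux" function `h` (think `h t = t^{n-1} w t |w t|^{p-2}` for
`w = u'` or `w = v'`) which is continuous on `[0,r]`, vanishes at `0`, and has nonnegative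
derivative on `(0,r]`, the function `w` is nonnegative on `[0,r]`. -/
lemma flux_nonneg (n : ℕ) (hn : 2 ≤ n) (p : ℝ) (hp : 1 < p) (r : ℝ) (hr : 0 < r)
    (w : ℝ → ℝ) (hw0 : w 0 = 0) (hwc : ContinuousOn w (Icc 0 r))
    (hD : ∀ t ∈ Ioc 0 r, ∃ d : ℝ, 0 ≤ d ∧
      HasDerivAt (fun s : ℝ => s ^ (n - 1) * w s * |w s| ^ (p - 2)) d t) :
    (MonotoneOn (fun s : ℝ => s ^ (n - 1) * w s * |w s| ^ (p - 2)) (Icc 0 r)) ∧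
      ∀ t ∈ Icc 0 r, 0 ≤ w t := by
  set h : ℝ → ℝ := fun s : ℝ => s ^ (n - 1) * w s * |w s| ^ (p - 2) with hhdef
  have h0 : h 0 = 0 := by
    simp [hhdef, zero_pow (by omega : n - 1 ≠ 0)]
  have hhcont : ContinuousOn h (Icc 0 r) := by
    have h1 : ContinuousOn (fun t : ℝ => t ^ (n - 1)) (Icc 0 r) := (continuous_pow _).continuousOn
    have h2 : ContinuousOn (fun t => w t * |w t| ^ (p - 2)) (Icc 0 r) :=
      (cont_mul_abs_rpow p hp).comp_continuousOn hwc
    simpa [hhdef, mul_assoc, Pi.mul_def] using h1.mul h2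
  have hmono : MonotoneOn h (Icc 0 r) := by
    apply monotoneOn_of_deriv_nonneg (convex_Icc 0 r) hhcont
    · intro t ht
      rw [interior_Icc] at ht
      obtain ⟨d, _, hd⟩ := hD t ⟨ht.1, ht.2.le⟩
      exact hd.differentiableAt.differentiableWithinAt
    · intro t ht
      rw [interior_Icc] at ht
      obtain ⟨d, hd0, hd⟩ := hD t ⟨ht.1, ht.2.le⟩
      rw [hd.deriv]
      exact hd0
  refine ⟨hmono, ?_⟩
  have hhnonneg : ∀ t ∈ Icc 0 r, 0 ≤ h t := by
    intro t ht
    have := hmono ⟨le_refl 0, hr.le⟩ ht ht.1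
    rwa [h0] at this
  intro t ht
  rcases eq_or_lt_of_le ht.1 with heq | hlt
  · rw [← heq, hw0]
  · by_contra hneg
    push_neg at hneg
    have h1 : 0 < |w t| ^ (p - 2) := Real.rpow_pos_of_pos (abs_pos.2 hneg.ne) _
    have h2 : 0 < t ^ (n - 1) := pow_pos hlt _
    have h3 := hhnonneg t ht
    simp only [hhdef] at h3
    nlinarith [mul_pos h2 h1]

/-- Estimate (2.12) of the paper: pointwise bound on (1/r)·u'(r)^{p−1−α}. -/
theorem gradient_bound
    (n : ℕ) (hn : 2 ≤ n) (p α : ℝ) (hp : 1 < p) (hα0 : 0 ≤ α) (hα : α < p - 1)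
    (δ : ℝ) (hδ : δ = ((n : ℝ) - 1) * (p - 1 - α) / (p - 1))
    (f₁ f₂ g₁ g₂ g₃ : ℝ → ℝ)
    (hf₁ : B1cond f₁) (hf₂ : B1cond f₂) (hg₁ : B1cond g₁) (hg₂ : B1cond g₂) (hg₃ : B1cond g₃)
    (R : EReal) (hR : 0 < R) (u v u' v' : ℝ → ℝ)
    (hsol : RadialSol n p α f₁ f₂ g₁ g₂ g₃ R u v u' v')
    (hunc : NonConstOn R u) (hvnc : NonConstOn R v) :
    ∀ r : ℝ, 0 < r → (r : EReal) < R →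
      (1 / r) * u' r ^ (p - 1 - α) ≤
        δ / (((n : ℝ) - 1) * (δ + 1)) * (f₁ r * g₁ (v r)) := by
  intro r hr hrR
  -- basic numeric facts
  have hn1 : (1:ℝ) ≤ (n:ℝ) - 1 := by
    have h2 : (2:ℝ) ≤ (n:ℝ) := by exact_mod_cast hn
    linarith
  have hn0 : (0:ℝ) < (n:ℝ) - 1 := by linarith
  have hp1 : (0:ℝ) < p - 1 := by linarith
  have hpα : (0:ℝ) < p - 1 - α := by linarith
  have hδpos : 0 < δ := by rw [hδ]; positivity
  have hδ1 : (0:ℝ) < δ + 1 := by linarith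
  set β := δ / ((n:ℝ) - 1) with hβdef
  have hβval : β = (p - 1 - α) / (p - 1) := by
    rw [hβdef, hδ]; field_simp
  have hβpos : 0 < β := by rw [hβval]; positivity
  have hβ1 : (p - 1) * β = p - 1 - α := by
    rw [hβval]; field_simp
  have hnβ : ((n:ℝ) - 1) * β = δ := by
    rw [hβdef]; field_simp
  have hcast : ((n - 1 : ℕ) : ℝ) = (n:ℝ) - 1 := by
    rw [Nat.cast_sub (by omega : 1 ≤ n)]; simp
  -- membership helpers
  have hmem : ∀ t : ℝ, t ≤ r → ((t : EReal) < R) := by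
    intro t ht
    exact lt_of_le_of_lt (by exact_mod_cast ht) hrR
  -- continuity of u', v' on [0, r]
  have hIccS : Icc 0 r ⊆ {x : ℝ | 0 ≤ x ∧ (x : EReal) < R} :=
    fun t ht => ⟨ht.1, hmem t ht.2⟩
  have hu'cont : ContinuousOn u' (Icc 0 r) := hsol.hu'c.mono hIccS
  have hv'cont : ContinuousOn v' (Icc 0 r) := hsol.hv'c.mono hIccS
  -- apply the flux lemma to u'
  have hfluxu := flux_nonneg n hn p hp r hr u' hsol.hu'0 hu'cont (by
    intro t ht
    refine ⟨t ^ (n - 1) * (f₁ t * g₁ (v t) * |u' t| ^ α), ?_, hsol.hequ t ht.1 (hmem t ht.2)⟩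
    have hf := (hf₁.2.2 t ht.1).le
    have hg := (hg₁.2.2 (v t) (hsol.hvpos t ht.1 (hmem t ht.2))).le
    exact mul_nonneg (pow_nonneg ht.1.le _)
      (mul_nonneg (mul_nonneg hf hg) (Real.rpow_nonneg (abs_nonneg _) _)))
  obtain ⟨hmono, hu'nonneg⟩ := hfluxu
  -- apply the flux lemma to v'
  have hg₃nonneg : ∀ x : ℝ, 0 ≤ x → 0 ≤ g₃ x := by
    intro x hx
    rcases eq_or_lt_of_le hx with heq | hlt
    · have hcw : ContinuousWithinAt g₃ (Ici 0) 0 := hg₃.1 0 (mem_Ici.2 (le_refl 0))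
      have htd : Tendsto g₃ (𝓝[Ioi (0:ℝ)] 0) (𝓝 (g₃ 0)) :=
        hcw.tendsto.mono_left (nhdsWithin_mono _ Ioi_subset_Ici_self)
      have := ge_of_tendsto htd (eventually_of_mem self_mem_nhdsWithin
        (fun y hy => (hg₃.2.2 y hy).le))
      rw [← heq]; exact this
    · exact (hg₃.2.2 x hlt).le
  have hfluxv := flux_nonneg n hn p hp r hr v' hsol.hv'0 hv'cont (by
    intro t ht
    refine ⟨t ^ (n - 1) * (f₂ t * g₂ (v t) * g₃ |u' t|), ?_, hsol.heqv t ht.1 (hmem t ht.2)⟩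
    have hf := (hf₂.2.2 t ht.1).le
    have hg := (hg₂.2.2 (v t) (hsol.hvpos t ht.1 (hmem t ht.2))).le
    have hg3 := hg₃nonneg |u' t| (abs_nonneg _)
    exact mul_nonneg (pow_nonneg ht.1.le _) (mul_nonneg (mul_nonneg hf hg) hg3))
  obtain ⟨hvmonoflux, hv'nonneg⟩ := hfluxv
  -- v is continuous and monotone on [0, r]
  have hvcont : ContinuousOn v (Icc 0 r) := fun t ht =>
    ((hsol.hv t ht.1 (hmem t ht.2)).continuousWithinAt).mono (fun x hx => hx.1)
  have hvmono : MonotoneOn v (Icc 0 r) := by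
    apply monotoneOn_of_deriv_nonneg (convex_Icc 0 r) hvcont
    · intro t ht
      rw [interior_Icc] at ht
      have := (hsol.hv t ht.1.le (hmem t ht.2.le)).hasDerivAt
        (mem_of_superset (Ioi_mem_nhds ht.1) Ioi_subset_Ici_self)
      exact this.differentiableAt.differentiableWithinAt
    · intro t ht
      rw [interior_Icc] at ht
      have hd := (hsol.hv t ht.1.le (hmem t ht.2.le)).hasDerivAt
        (mem_of_superset (Ioi_mem_nhds ht.1) Ioi_subset_Ici_self)
      rw [hd.deriv]
      exact hv'nonneg t ⟨ht.1.le, ht.2.le⟩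
  have hvnonneg : ∀ t ∈ Icc 0 r, 0 ≤ v t := by
    intro t ht
    rcases eq_or_lt_of_le ht.1 with heq | hlt
    · have hcw : ContinuousWithinAt v (Icc 0 r) 0 := hvcont 0 ⟨le_refl 0, hr.le⟩
      have htd : Tendsto v (𝓝[Ioc (0:ℝ) r] 0) (𝓝 (v 0)) :=
        hcw.tendsto.mono_left (nhdsWithin_mono _ (fun x hx => ⟨hx.1.le, hx.2⟩))
      haveI : (𝓝[Ioc (0:ℝ) r] 0).NeBot := by
        rw [← mem_closure_iff_nhdsWithin_neBot, closure_Ioc hr.ne]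
        exact ⟨le_refl 0, hr.le⟩
      have := ge_of_tendsto htd (eventually_of_mem self_mem_nhdsWithin
        (fun y hy => (hsol.hvpos y hy.1 (hmem y hy.2)).le))
      rw [← heq]; exact this
    · exact (hsol.hvpos t hlt (hmem t ht.2)).le
  -- the flux function for u
  set h : ℝ → ℝ := fun s : ℝ => s ^ (n - 1) * u' s * |u' s| ^ (p - 2) with hhdef
  have h0 : h 0 = 0 := by simp [hhdef, zero_pow (by omega : n - 1 ≠ 0)]
  have hhcont : ContinuousOn h (Icc 0 r) := by
    have h1 : ContinuousOn (fun t : ℝ => t ^ (n - 1)) (Icc 0 r) := (continuous_pow _).continuousOn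
    have h2 : ContinuousOn (fun t => u' t * |u' t| ^ (p - 2)) (Icc 0 r) :=
      (cont_mul_abs_rpow p hp).comp_continuousOn hu'cont
    simpa [hhdef, mul_assoc, Pi.mul_def] using h1.mul h2
  have hh_eq : ∀ t ∈ Icc 0 r, h t = t ^ (n - 1) * (u' t) ^ (p - 1) := by
    intro t ht
    rcases eq_or_lt_of_le (hu'nonneg t ht) with heq | hpos
    · simp [hhdef, ← heq, Real.zero_rpow (by linarith : p - 1 ≠ 0)]
    · have habs : |u' t| = u' t := abs_of_pos hpos
      have hkey : u' t * (u' t) ^ (p - 2) = (u' t) ^ (p - 1) := by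
        rw [show p - 1 = 1 + (p - 2) by ring, Real.rpow_add hpos, Real.rpow_one]
      simp only [hhdef]
      rw [habs, mul_assoc, hkey]
  have hhnonneg : ∀ t ∈ Icc 0 r, 0 ≤ h t := by
    intro t ht
    have := hmono ⟨le_refl 0, hr.le⟩ ht ht.1
    rwa [h0] at this
  -- case u' r = 0
  rcases eq_or_lt_of_le (hu'nonneg r ⟨hr.le, le_refl r⟩) with hcase | hu'r
  · rw [← hcase, Real.zero_rpow (ne_of_gt hpα), mul_zero]
    have hf := (hf₁.2.2 r hr).le
    have hg := (hg₁.2.2 (v r) (hsol.hvpos r hr hrR)).le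
    have hK : (0:ℝ) ≤ δ / (((n : ℝ) - 1) * (δ + 1)) := by positivity
    positivity
  -- main case : u' r > 0
  · have hhr : 0 < h r := by
      rw [hh_eq r ⟨hr.le, le_refl r⟩]
      exact mul_pos (pow_pos hr _) (Real.rpow_pos_of_pos hu'r _)
    -- the last zero of h before r
    have hZclosed : IsClosed (Icc 0 r ∩ h ⁻¹' {0}) :=
      hhcont.preimage_isClosed_of_isClosed isClosed_Icc isClosed_singleton
    have hZne : (Icc 0 r ∩ h ⁻¹' {0}).Nonempty := ⟨0, ⟨le_refl 0, hr.le⟩, by simp [h0]⟩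
    have hZbdd : BddAbove (Icc 0 r ∩ h ⁻¹' {0}) := ⟨r, fun x hx => hx.1.2⟩
    set r₀ := sSup (Icc 0 r ∩ h ⁻¹' {0}) with hr₀def
    have hr₀mem := hZclosed.csSup_mem hZne hZbdd
    have hr₀Icc : r₀ ∈ Icc 0 r := hr₀mem.1
    have hhr₀ : h r₀ = 0 := hr₀mem.2
    have hr₀r : r₀ < r := by
      rcases lt_or_eq_of_le hr₀Icc.2 with hlt | heq
      · exact hlt
      · exfalso; rw [← heq, hhr₀] at hhr; exact lt_irrefl 0 hhr
      -- note: heq : r₀ = r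
    have hhpos : ∀ t, r₀ < t → t ≤ r → 0 < h t := by
      intro t h1 h2
      have ht : t ∈ Icc 0 r := ⟨le_trans hr₀Icc.1 h1.le, h2⟩
      rcases lt_or_eq_of_le (hhnonneg t ht) with hpos | heq
      · exact hpos
      · exfalso
        have : t ∈ Icc 0 r ∩ h ⁻¹' {0} := ⟨ht, by simp [← heq]⟩
        exact absurd (le_csSup hZbdd this) (not_le.2 h1)
    have hu'pos : ∀ t, r₀ < t → t ≤ r → 0 < u' t := by
      intro t h1 h2
      have ht : t ∈ Icc 0 r := ⟨le_trans hr₀Icc.1 h1.le, h2⟩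
      rcases lt_or_eq_of_le (hu'nonneg t ht) with hpos | heq
      · exact hpos
      · exfalso
        have hp2 := hhpos t h1 h2
        rw [hh_eq t ht, ← heq, Real.zero_rpow (by linarith : p - 1 ≠ 0), mul_zero] at hp2
        exact lt_irrefl 0 hp2
    -- derivative of h ^ β on (r₀, r]
    have hφderiv : ∀ t, r₀ < t → t ≤ r →
        HasDerivAt (fun x => h x ^ β) (β * (f₁ t * g₁ (v t)) * t ^ δ) t := by
      intro t h1 h2
      have ht0 : 0 < t := lt_of_le_of_lt hr₀Icc.1 h1
      have htIcc : t ∈ Icc 0 r := ⟨ht0.le, h2⟩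
      have hht := hhpos t h1 h2
      have hu't := hu'pos t h1 h2
      have hD : HasDerivAt h (t ^ (n - 1) * (f₁ t * g₁ (v t) * |u' t| ^ α)) t :=
        hsol.hequ t ht0 (hmem t h2)
      have key := hD.rpow_const (p := β) (Or.inl (ne_of_gt hht))
      convert key using 1
      rw [hh_eq t htIcc, abs_of_pos hu't]
      rw [Real.mul_rpow (by positivity) (Real.rpow_nonneg hu't.le _)]
      rw [← Real.rpow_natCast t (n - 1), hcast,
        ← Real.rpow_mul ht0.le, ← Real.rpow_mul hu't.le]
      have e1 : ((n:ℝ) - 1) * (β - 1) = δ - ((n:ℝ) - 1) := by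
        rw [mul_sub, hnβ]; ring
      have e2 : (p - 1) * (β - 1) = -α := by
        rw [mul_sub, hβ1]; ring
      rw [e1, e2]
      have t1 : t ^ ((n:ℝ) - 1) * t ^ (δ - ((n:ℝ) - 1)) = t ^ δ := by
        rw [← Real.rpow_add ht0]; ring_nf
      have t2 : u' t ^ α * u' t ^ (-α) = 1 := by
        rw [← Real.rpow_add hu't]; simp
      calc β * (f₁ t * g₁ (v t)) * t ^ δ
          = β * (f₁ t * g₁ (v t)) * (t ^ ((n:ℝ) - 1) * t ^ (δ - ((n:ℝ) - 1)))
              * (u' t ^ α * u' t ^ (-α)) := by rw [t1, t2]; ring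
        _ = t ^ ((n:ℝ) - 1) * (f₁ t * g₁ (v t) * u' t ^ α) * β
              * (t ^ (δ - ((n:ℝ) - 1)) * u' t ^ (-α)) := by ring
    -- integral inequality for each s in (r₀, r)
    have hF : (0:ℝ) < f₁ r * g₁ (v r) :=
      mul_pos (hf₁.2.2 r hr) (hg₁.2.2 (v r) (hsol.hvpos r hr hrR))
    have hint : ∀ s ∈ Ioo r₀ r, h r ^ β ≤ h s ^ β + β * (f₁ r * g₁ (v r)) * (r ^ (δ+1) / (δ+1)) := by
      intro s hs
      have hs0 : 0 < s := lt_of_le_of_lt hr₀Icc.1 hs.1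
      have hsr : s ≤ r := hs.2.le
      have hsubIcc : Icc s r ⊆ Icc 0 r := Icc_subset_Icc hs0.le (le_refl r)
      have hcont1 : ContinuousOn (fun t => β * (f₁ t * g₁ (v t)) * t ^ δ) (Icc s r) := by
        have c1 : ContinuousOn f₁ (Icc s r) := hf₁.1.mono (fun x hx => le_trans hs0.le hx.1)
        have c2 : ContinuousOn (fun t => g₁ (v t)) (Icc s r) :=
          hg₁.1.comp (hvcont.mono hsubIcc) (fun x hx => hvnonneg x (hsubIcc hx))
        have c3 : ContinuousOn (fun t : ℝ => t ^ δ) (Icc s r) := fun t ht =>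
          (Real.continuousAt_rpow_const t δ
            (Or.inl (ne_of_gt (lt_of_lt_of_le hs0 ht.1)))).continuousWithinAt
        exact (continuousOn_const.mul (c1.mul c2)).mul c3
      have hint1 : IntervalIntegrable (fun t => β * (f₁ t * g₁ (v t)) * t ^ δ)
          MeasureTheory.volume s r := by
        apply ContinuousOn.intervalIntegrable
        rwa [uIcc_of_le hsr]
      have hint2 : IntervalIntegrable (fun t : ℝ => β * (f₁ r * g₁ (v r)) * t ^ δ)
          MeasureTheory.volume s r := by
        apply ContinuousOn.intervalIntegrable
        rw [uIcc_of_le hsr]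
        exact continuousOn_const.mul (fun t ht =>
          (Real.continuousAt_rpow_const t δ
            (Or.inl (ne_of_gt (lt_of_lt_of_le hs0 ht.1)))).continuousWithinAt)
      have hFTC : ∫ t in s..r, β * (f₁ t * g₁ (v t)) * t ^ δ = h r ^ β - h s ^ β := by
        apply intervalIntegral.integral_eq_sub_of_hasDerivAt
        · intro t ht
          rw [uIcc_of_le hsr] at ht
          exact hφderiv t (lt_of_lt_of_le hs.1 ht.1) ht.2
        · exact hint1
      have hmono_int : (∫ t in s..r, β * (f₁ t * g₁ (v t)) * t ^ δ)
          ≤ ∫ t in s..r, β * (f₁ r * g₁ (v r)) * t ^ δ := by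
        apply intervalIntegral.integral_mono_on hsr hint1 hint2
        intro t ht
        have ht0 : 0 < t := lt_of_lt_of_le hs0 ht.1
        have htIcc : t ∈ Icc 0 r := hsubIcc ht
        have hle1 : f₁ t ≤ f₁ r := hf₁.2.1 (mem_Ici.2 ht0.le) (mem_Ici.2 hr.le) ht.2
        have hle2 : g₁ (v t) ≤ g₁ (v r) := hg₁.2.1 (mem_Ici.2 (hvnonneg t htIcc))
          (mem_Ici.2 (hvnonneg r ⟨hr.le, le_refl r⟩))
          (hvmono htIcc ⟨hr.le, le_refl r⟩ ht.2)
        have hgt : (0:ℝ) ≤ g₁ (v t) := le_trans (hg₁.2.2 (v t)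
          (hsol.hvpos t ht0 (hmem t ht.2))).le (le_refl _)
        have hft : (0:ℝ) ≤ f₁ t := (hf₁.2.2 t ht0).le
        have hprod : f₁ t * g₁ (v t) ≤ f₁ r * g₁ (v r) :=
          mul_le_mul hle1 hle2 hgt (le_trans hft hle1)
        exact mul_le_mul_of_nonneg_right
          (mul_le_mul_of_nonneg_left hprod hβpos.le) (Real.rpow_nonneg ht0.le δ)
      have hval : (∫ t in s..r, β * (f₁ r * g₁ (v r)) * t ^ δ)
          = β * (f₁ r * g₁ (v r)) * ((r ^ (δ+1) - s ^ (δ+1)) / (δ+1)) := by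
        rw [intervalIntegral.integral_const_mul, integral_rpow (Or.inl (by linarith : (-1:ℝ) < δ))]
      have hsδ : (0:ℝ) ≤ s ^ (δ+1) := Real.rpow_nonneg hs0.le _
      have hβF : (0:ℝ) ≤ β * (f₁ r * g₁ (v r)) := mul_nonneg hβpos.le hF.le
      have hstep : β * (f₁ r * g₁ (v r)) * ((r ^ (δ+1) - s ^ (δ+1)) / (δ+1))
          ≤ β * (f₁ r * g₁ (v r)) * (r ^ (δ+1) / (δ+1)) := by
        apply mul_le_mul_of_nonneg_left _ hβF
        exact (div_le_div_iff_of_pos_right hδ1).mpr (by linarith)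
      linarith [hFTC, hmono_int, hval.symm ▸ hmono_int]
    -- limit as s → r₀⁺
    have hφtend : Tendsto (fun s => h s ^ β) (𝓝[Ioo r₀ r] r₀) (𝓝 0) := by
      have h1 : Tendsto h (𝓝[Ioo r₀ r] r₀) (𝓝 0) := by
        have h2 := (hhcont r₀ hr₀Icc).tendsto
        rw [hhr₀] at h2
        exact h2.mono_left (nhdsWithin_mono _
          (fun x hx => ⟨le_trans hr₀Icc.1 hx.1.le, hx.2.le⟩))
      have h2 : ContinuousAt (fun x : ℝ => x ^ β) 0 :=
        Real.continuousAt_rpow_const 0 β (Or.inr hβpos.le)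
      have h3 := h2.tendsto.comp h1
      rw [Real.zero_rpow (ne_of_gt hβpos)] at h3
      exact h3
    haveI hneBot : (𝓝[Ioo r₀ r] r₀).NeBot := by
      rw [← mem_closure_iff_nhdsWithin_neBot, closure_Ioo hr₀r.ne]
      exact ⟨le_refl r₀, hr₀r.le⟩
    have hfinal : h r ^ β ≤ β * (f₁ r * g₁ (v r)) * (r ^ (δ+1) / (δ+1)) := by
      have hev : ∀ᶠ s in 𝓝[Ioo r₀ r] r₀,
          h r ^ β - β * (f₁ r * g₁ (v r)) * (r ^ (δ+1) / (δ+1)) ≤ h s ^ β :=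
        eventually_of_mem self_mem_nhdsWithin (fun s hs => by linarith [hint s hs])
      have := ge_of_tendsto hφtend hev
      linarith
    -- final algebra
    have hhrβ : h r ^ β = r ^ δ * u' r ^ (p - 1 - α) := by
      rw [hh_eq r ⟨hr.le, le_refl r⟩,
        Real.mul_rpow (by positivity) (Real.rpow_nonneg hu'r.le _),
        ← Real.rpow_natCast r (n - 1), hcast,
        ← Real.rpow_mul hr.le, ← Real.rpow_mul hu'r.le, hnβ, hβ1]
    have hrδ : r ^ (δ + 1) = r ^ δ * r := by
      rw [Real.rpow_add hr, Real.rpow_one]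
    have hrδpos : 0 < r ^ δ := Real.rpow_pos_of_pos hr δ
    rw [hhrβ, hrδ] at hfinal
    have hX : u' r ^ (p - 1 - α) ≤ δ / (((n:ℝ) - 1) * (δ + 1)) * (f₁ r * g₁ (v r)) * r := by
      have h1 : r ^ δ * (u' r ^ (p - 1 - α))
          ≤ r ^ δ * (δ / (((n:ℝ) - 1) * (δ + 1)) * (f₁ r * g₁ (v r)) * r) := by
        have hKβ : δ / (((n:ℝ) - 1) * (δ + 1)) = β / (δ + 1) := by
          rw [hβdef, div_div]
        rw [hKβ]
        calc r ^ δ * (u' r ^ (p - 1 - α))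
            ≤ β * (f₁ r * g₁ (v r)) * (r ^ δ * r / (δ + 1)) := hfinal
          _ = r ^ δ * (β / (δ + 1) * (f₁ r * g₁ (v r)) * r) := by ring
      exact le_of_mul_le_mul_left h1 hrδpos
    rw [one_div, inv_mul_le_iff₀ hr]
    calc u' r ^ (p - 1 - α)
        ≤ δ / (((n:ℝ) - 1) * (δ + 1)) * (f₁ r * g₁ (v r)) * r := hX
      _ = r * (δ / (((n:ℝ) - 1) * (δ + 1)) * (f₁ r * g₁ (v r))) := by ring
end
end

section
/- Fix an integer n ≥ 2, reals p > 1, m₁, m₂ ≥ 0, c₁, c₂ > 0, k₁, k₂, k₃ ≥ 0 and α with 0 ≤ α < p−1, and assume (p−1−α)(p−1−k₂) > k₁·k₃. Set λ = [(p−α+m₁)(p−1−k₂) + k₁(p−k₃+m₂)] / [(p−1−α)(p−1−k₂) − k₁k₃] and μ = [(p−1−α)(p+m₂) + k₃(1+m₁)] / [(p−1−α)(p−1−k₂) − k₁k₃]. Then λ > 1 and μ > 1, and there exist unique constants C_λ > 0 and C_μ > 0 such that the functions u₀(r) = C_λ·r^λ and v₀(r) = C_μ·r^μ satisfy, for all r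 > 0, (d/dr)(r^{n−1}·u₀'(r)^{p−1}) = r^{n−1}·c₁·r^{m₁}·v₀(r)^{k₁}·u₀'(r)^α and (d/dr)(r^{n−1}·v₀'(r)^{p−1}) = r^{n−1}·c₂·r^{m₂}·v₀(r)^{k₂}·u₀'(r)^{k₃}. Moreover, (λ, μ, C_λ, C_μ) is the unique quadruple of positive reals for which (C_λ·r^λ, C_μ·r^μ) satisfies these two equations for all r > 0. -/
open Set Filter Topology

set_option maxHeartbeats 1000000

noncomputable section

/-- The pair (Cl·r^lam, Cm·r^mu) solves the radial system
(d/dr)(r^{n−1}·u₀'(r)^{p−1}) = r^{n−1}·c₁·r^{m₁}·v₀(r)^{k₁}·u₀'(r)^α and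
(d/dr)(r^{n−1}·v₀'(r)^{p−1}) = r^{n−1}·c₂·r^{m₂}·v₀(r)^{k₂}·u₀'(r)^{k₃}
for all r > 0, where u₀'(r) = Cl·lam·r^{lam−1} and v₀'(r) = Cm·mu·r^{mu−1}. -/
def PowerODE (n : ℕ) (p α c₁ c₂ m₁ m₂ k₁ k₂ k₃ lam mu Cl Cm : ℝ) : Prop :=
  ∀ r : ℝ, 0 < r →
    HasDerivAt (fun t : ℝ => t ^ (n - 1) * (Cl * lam * t ^ (lam - 1)) ^ (p - 1))
      (r ^ (n - 1) * (c₁ * r ^ m₁ * (Cm * r ^ mu) ^ k₁ * (Cl * lam * r ^ (lam - 1)) ^ α)) r ∧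
    HasDerivAt (fun t : ℝ => t ^ (n - 1) * (Cm * mu * t ^ (mu - 1)) ^ (p - 1))
      (r ^ (n - 1) * (c₂ * r ^ m₂ * (Cm * r ^ mu) ^ k₂ * (Cl * lam * r ^ (lam - 1)) ^ k₃)) r



lemma exp_log_eq' {a b : ℝ} (ha : 0 < a) (hb : 0 < b) (h : Real.log a = Real.log b) : a = b := by
  rw [← Real.exp_log ha, ← Real.exp_log hb, h]

lemma power_eq' {K R s f : ℝ} (hR : 0 < R) (h : ∀ r : ℝ, 0 < r → K * r ^ s = R * r ^ f) :
    K = R ∧ s = f := by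
  have h1 := h 1 one_pos
  rw [Real.one_rpow, Real.one_rpow, mul_one, mul_one] at h1
  refine ⟨h1, ?_⟩
  have h2 := h (Real.exp 1) (Real.exp_pos 1)
  rw [h1, Real.exp_one_rpow, Real.exp_one_rpow] at h2
  exact Real.exp_eq_exp.mp (mul_left_cancel₀ hR.ne' h2)

lemma hasDerivAt_power' (n : ℕ) (hn : 1 ≤ n) {A : ℝ} (hA : 0 < A) (e p r : ℝ) (hr : 0 < r) :
    HasDerivAt (fun t : ℝ => t ^ (n - 1) * (A * t ^ e) ^ (p - 1))
      (A ^ (p - 1) * ((n:ℝ) - 1 + e * (p - 1)) * r ^ ((n:ℝ) - 1 + e * (p - 1) - 1)) r := by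
  have hg : HasDerivAt (fun t : ℝ => A ^ (p-1) * t ^ ((n:ℝ) - 1 + e * (p - 1)))
      (A ^ (p-1) * (((n:ℝ) - 1 + e * (p - 1)) * r ^ ((n:ℝ) - 1 + e * (p - 1) - 1))) r :=
    (Real.hasDerivAt_rpow_const (Or.inl hr.ne')).const_mul _
  have heq : (fun t : ℝ => t ^ (n - 1) * (A * t ^ e) ^ (p - 1)) =ᶠ[𝓝 r]
      (fun t : ℝ => A ^ (p-1) * t ^ ((n:ℝ) - 1 + e * (p - 1))) := by
    filter_upwards [isOpen_Ioi.mem_nhds hr] with t ht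
    have ht : (0:ℝ) < t := ht
    rw [Real.mul_rpow hA.le (Real.rpow_nonneg ht.le _), ← Real.rpow_natCast t (n-1),
      ← Real.rpow_mul ht.le, Nat.cast_sub hn, Nat.cast_one, Real.rpow_add ht]
    ring
  have := hg.congr_of_eventuallyEq heq
  exact this.congr_deriv (by ring)

lemma rhs_eq' (n : ℕ) (hn : 1 ≤ n) {c Cm A r : ℝ} (hc : 0 < c) (hCm : 0 < Cm) (hA : 0 < A)
    (hr : 0 < r) (m mu e k k' : ℝ) :
    r ^ (n - 1) * (c * r ^ m * (Cm * r ^ mu) ^ k * (A * r ^ e) ^ k') =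
      c * Cm ^ k * A ^ k' * r ^ ((n:ℝ) - 1 + m + mu * k + e * k') := by
  rw [Real.mul_rpow hCm.le (Real.rpow_nonneg hr.le _),
      Real.mul_rpow hA.le (Real.rpow_nonneg hr.le _),
      ← Real.rpow_natCast r (n - 1), ← Real.rpow_mul hr.le, ← Real.rpow_mul hr.le,
      Nat.cast_sub hn, Nat.cast_one,
      Real.rpow_add hr, Real.rpow_add hr, Real.rpow_add hr]
  ring

lemma coeff_log_iff' {X e c Cm A k k' p : ℝ} (hX : 0 < X) (he : 0 < e) (hc : 0 < c)
    (hCm : 0 < Cm) (hA : 0 < A) :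
    X ^ (p-1) * e = c * Cm ^ k * A ^ k' ↔
      (p-1) * Real.log X + Real.log e = Real.log c + k * Real.log Cm + k' * Real.log A := by
  have l1 : Real.log (X ^ (p-1) * e) = (p-1) * Real.log X + Real.log e := by
    rw [Real.log_mul (by positivity) he.ne', Real.log_rpow hX]
  have l2 : Real.log (c * Cm ^ k * A ^ k') = Real.log c + k * Real.log Cm + k' * Real.log A := by
    rw [Real.log_mul (by positivity) (by positivity), Real.log_mul hc.ne' (by positivity),
      Real.log_rpow hCm, Real.log_rpow hA]
  constructor
  · intro h
    rw [← l1, ← l2, h]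
  · intro h
    exact exp_log_eq' (by positivity) (by positivity) (by rw [l1, l2]; exact h)

lemma powerODE_iff' (n : ℕ) (hn : 1 ≤ n) (p α c₁ c₂ m₁ m₂ k₁ k₂ k₃ l m Cl Cm : ℝ)
    (hc₁ : 0 < c₁) (hc₂ : 0 < c₂) (hl : 0 < l) (hm : 0 < m) (hCl : 0 < Cl) (hCm : 0 < Cm) :
    PowerODE n p α c₁ c₂ m₁ m₂ k₁ k₂ k₃ l m Cl Cm ↔
      ((Cl*l) ^ (p-1) * ((n:ℝ)-1+(l-1)*(p-1)) = c₁ * Cm ^ k₁ * (Cl*l) ^ α ∧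
       (n:ℝ)-1+(l-1)*(p-1) - 1 = (n:ℝ)-1 + m₁ + m*k₁ + (l-1)*α ∧
       (Cm*m) ^ (p-1) * ((n:ℝ)-1+(m-1)*(p-1)) = c₂ * Cm ^ k₂ * (Cl*l) ^ k₃ ∧
       (n:ℝ)-1+(m-1)*(p-1) - 1 = (n:ℝ)-1 + m₂ + m*k₂ + (l-1)*k₃) := by
  have hA : 0 < Cl * l := mul_pos hCl hl
  have hB : 0 < Cm * m := mul_pos hCm hm
  have hR₁ : 0 < c₁ * Cm ^ k₁ * (Cl*l) ^ α := by positivity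
  have hR₂ : 0 < c₂ * Cm ^ k₂ * (Cl*l) ^ k₃ := by positivity
  constructor
  · intro h
    have h1 : ∀ r : ℝ, 0 < r →
        (Cl*l)^(p-1) * ((n:ℝ)-1+(l-1)*(p-1)) * r ^ ((n:ℝ)-1+(l-1)*(p-1)-1)
        = (c₁ * Cm ^ k₁ * (Cl*l) ^ α) * r ^ ((n:ℝ)-1+m₁+m*k₁+(l-1)*α) := by
      intro r hr
      have hd := (h r hr).1
      have hd' := hasDerivAt_power' n hn hA (l-1) p r hr
      have hu := hd'.unique hd
      rw [hu, rhs_eq' n hn hc₁ hCm hA hr]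
    have h2 : ∀ r : ℝ, 0 < r →
        (Cm*m)^(p-1) * ((n:ℝ)-1+(m-1)*(p-1)) * r ^ ((n:ℝ)-1+(m-1)*(p-1)-1)
        = (c₂ * Cm ^ k₂ * (Cl*l) ^ k₃) * r ^ ((n:ℝ)-1+m₂+m*k₂+(l-1)*k₃) := by
      intro r hr
      have hd := (h r hr).2
      have hd' := hasDerivAt_power' n hn hB (m-1) p r hr
      have hu := hd'.unique hd
      rw [hu, rhs_eq' n hn hc₂ hCm hA hr]
    obtain ⟨e1, e2⟩ := power_eq' hR₁ h1
    obtain ⟨e3, e4⟩ := power_eq' hR₂ h2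
    refine ⟨e1, by linarith [e2], e3, by linarith [e4]⟩
  · rintro ⟨hc1, he1, hc2, he2⟩ r hr
    constructor
    · have hd' := hasDerivAt_power' n hn hA (l-1) p r hr
      convert hd' using 1
      rw [rhs_eq' n hn hc₁ hCm hA hr, ← hc1, ← he1]
    · have hd' := hasDerivAt_power' n hn hB (m-1) p r hr
      convert hd' using 1
      rw [rhs_eq' n hn hc₂ hCm hA hr, ← hc2, ← he2]

/-- Section 5 of the paper: the limiting system has a unique positive power solution
(C_λ·r^λ, C_μ·r^μ), with the given exponents λ, μ > 1. -/
theorem power_solution_exists_unique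
    (n : ℕ) (hn : 2 ≤ n) (p α m₁ m₂ c₁ c₂ k₁ k₂ k₃ : ℝ)
    (hp : 1 < p) (hm₁ : 0 ≤ m₁) (hm₂ : 0 ≤ m₂) (hc₁ : 0 < c₁) (hc₂ : 0 < c₂)
    (hk₁ : 0 ≤ k₁) (hk₂ : 0 ≤ k₂) (hk₃ : 0 ≤ k₃)
    (hα0 : 0 ≤ α) (hα : α < p - 1)
    (hex : k₁ * k₃ < (p - 1 - α) * (p - 1 - k₂))
    (lam mu : ℝ)
    (hlam : lam = ((p - α + m₁) * (p - 1 - k₂) + k₁ * (p - k₃ + m₂)) /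
      ((p - 1 - α) * (p - 1 - k₂) - k₁ * k₃))
    (hmu : mu = ((p - 1 - α) * (p + m₂) + k₃ * (1 + m₁)) /
      ((p - 1 - α) * (p - 1 - k₂) - k₁ * k₃)) :
    1 < lam ∧ 1 < mu ∧
    (∃! C : ℝ × ℝ, 0 < C.1 ∧ 0 < C.2 ∧
      PowerODE n p α c₁ c₂ m₁ m₂ k₁ k₂ k₃ lam mu C.1 C.2) ∧
    (∃! Q : ℝ × ℝ × ℝ × ℝ, 0 < Q.1 ∧ 0 < Q.2.1 ∧ 0 < Q.2.2.1 ∧ 0 < Q.2.2.2 ∧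
      PowerODE n p α c₁ c₂ m₁ m₂ k₁ k₂ k₃ Q.1 Q.2.1 Q.2.2.1 Q.2.2.2) := by
  have hn1 : 1 ≤ n := by omega
  have hn2 : (2:ℝ) ≤ (n:ℝ) := by exact_mod_cast hn
  have hp1 : (0:ℝ) < p - 1 := by linarith
  have hpa : (0:ℝ) < p - 1 - α := by linarith
  have hD : (0:ℝ) < (p-1-α)*(p-1-k₂) - k₁*k₃ := by
    nlinarith [mul_nonneg hk₁ hk₃]
  have hpk : (0:ℝ) < p - 1 - k₂ := by
    rcases lt_or_ge 0 (p-1-k₂) with h | h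
    · exact h
    · nlinarith [mul_nonneg hk₁ hk₃, mul_nonpos_of_nonneg_of_nonpos hpa.le h]
  have hDne : ((p-1-α)*(p-1-k₂) - k₁*k₃) ≠ 0 := hD.ne'
  have hlam1 : 1 < lam := by
    rw [hlam, lt_div_iff₀ hD]
    nlinarith [mul_pos (show (0:ℝ) < 1+m₁ by linarith) hpk,
      mul_nonneg hk₁ (show (0:ℝ) ≤ p+m₂ by linarith)]
  have hmu1 : 1 < mu := by
    rw [hmu, lt_div_iff₀ hD]
    nlinarith [mul_pos hpa (show (0:ℝ) < 1+m₂+k₂ by linarith),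
      mul_nonneg hk₃ (show (0:ℝ) ≤ 1+m₁ by linarith), mul_nonneg hk₁ hk₃]
  have hlam0 : 0 < lam := by linarith
  have hmu0 : 0 < mu := by linarith
  -- the exponent identities for (lam, mu)
  have ha : lam*(p-1-α) - mu*k₁ = p-α+m₁ := by
    rw [hlam, hmu, div_mul_eq_mul_div, div_mul_eq_mul_div, div_sub_div_same, div_eq_iff hDne]; ring
  have hb : mu*(p-1-k₂) - lam*k₃ = p+m₂-k₃ := by
    rw [hlam, hmu, div_mul_eq_mul_div, div_mul_eq_mul_div, div_sub_div_same, div_eq_iff hDne]; ring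
  have hsolve : ∀ l m : ℝ, l*(p-1-α) - m*k₁ = p-α+m₁ → m*(p-1-k₂) - l*k₃ = p+m₂-k₃ →
      l = lam ∧ m = mu := by
    intro l m h1 h2
    have hl : (l - lam) * ((p-1-α)*(p-1-k₂) - k₁*k₃) = 0 := by
      linear_combination (p-1-k₂)*h1 - (p-1-k₂)*ha + k₁*h2 - k₁*hb
    have hm : (m - mu) * ((p-1-α)*(p-1-k₂) - k₁*k₃) = 0 := by
      linear_combination k₃*h1 - k₃*ha + (p-1-α)*h2 - (p-1-α)*hb
    constructor
    · have := (mul_eq_zero.mp hl).resolve_right hDne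
      linarith [this]
    · have := (mul_eq_zero.mp hm).resolve_right hDne
      linarith [this]
  -- positivity of e₁, e₂
  have he₁ : (0:ℝ) < (n:ℝ)-1+(lam-1)*(p-1) := by
    nlinarith [mul_pos (show (0:ℝ) < lam - 1 by linarith) hp1]
  have he₂ : (0:ℝ) < (n:ℝ)-1+(mu-1)*(p-1) := by
    nlinarith [mul_pos (show (0:ℝ) < mu - 1 by linarith) hp1]
  -- construct the coefficients
  set L₁ : ℝ := Real.log c₁ - Real.log ((n:ℝ)-1+(lam-1)*(p-1)) with hL₁
  set L₂ : ℝ := Real.log c₂ - Real.log ((n:ℝ)-1+(mu-1)*(p-1)) - (p-1)*Real.log mu with hL₂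
  set x : ℝ := ((p-1-k₂)*L₁ + k₁*L₂)/((p-1-α)*(p-1-k₂) - k₁*k₃) with hxdef
  set y : ℝ := (k₃*L₁ + (p-1-α)*L₂)/((p-1-α)*(p-1-k₂) - k₁*k₃) with hydef
  have hx1 : (p-1-α)*x - k₁*y = L₁ := by
    rw [hxdef, hydef]; field_simp; ring
  have hx2 : (p-1-k₂)*y - k₃*x = L₂ := by
    rw [hxdef, hydef, mul_div_assoc', mul_div_assoc', div_sub_div_same, div_eq_iff hDne]; ring
  set Cl : ℝ := Real.exp x / lam with hCldef
  set Cm : ℝ := Real.exp y with hCmdef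
  have hCl0 : 0 < Cl := div_pos (Real.exp_pos x) hlam0
  have hCm0 : 0 < Cm := Real.exp_pos y
  have hClA : Cl * lam = Real.exp x := by
    rw [hCldef]; field_simp
  -- coefficient equations for the constructed pair
  have hco1 : (Cl*lam) ^ (p-1) * ((n:ℝ)-1+(lam-1)*(p-1)) = c₁ * Cm ^ k₁ * (Cl*lam) ^ α := by
    rw [coeff_log_iff' (mul_pos hCl0 hlam0) he₁ hc₁ hCm0 (mul_pos hCl0 hlam0), hClA, hCmdef]
    simp only [Real.log_exp]
    linarith [hx1, hL₁]
  have hco2 : (Cm*mu) ^ (p-1) * ((n:ℝ)-1+(mu-1)*(p-1)) = c₂ * Cm ^ k₂ * (Cl*lam) ^ k₃ := by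
    rw [coeff_log_iff' (mul_pos hCm0 hmu0) he₂ hc₂ hCm0 (mul_pos hCl0 hlam0), hClA, hCmdef,
      Real.log_mul (Real.exp_pos y).ne' hmu0.ne']
    simp only [Real.log_exp]
    linarith [hx2, hL₂]
  have hODE : PowerODE n p α c₁ c₂ m₁ m₂ k₁ k₂ k₃ lam mu Cl Cm := by
    rw [powerODE_iff' n hn1 p α c₁ c₂ m₁ m₂ k₁ k₂ k₃ lam mu Cl Cm hc₁ hc₂ hlam0 hmu0 hCl0 hCm0]
    exact ⟨hco1, by linear_combination ha, hco2, by linear_combination hb⟩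
  -- uniqueness of the coefficient pair
  have hpairuniq : ∀ Cl' Cm' : ℝ, 0 < Cl' → 0 < Cm' →
      PowerODE n p α c₁ c₂ m₁ m₂ k₁ k₂ k₃ lam mu Cl' Cm' → Cl' = Cl ∧ Cm' = Cm := by
    intro Cl' Cm' hCl' hCm' hode
    rw [powerODE_iff' n hn1 p α c₁ c₂ m₁ m₂ k₁ k₂ k₃ lam mu Cl' Cm' hc₁ hc₂ hlam0 hmu0 hCl' hCm']
      at hode
    obtain ⟨hc1', _, hc2', _⟩ := hode
    rw [coeff_log_iff' (mul_pos hCl' hlam0) he₁ hc₁ hCm' (mul_pos hCl' hlam0)] at hc1'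
    rw [coeff_log_iff' (mul_pos hCm' hmu0) he₂ hc₂ hCm' (mul_pos hCl' hlam0)] at hc2'
    rw [Real.log_mul hCm'.ne' hmu0.ne'] at hc2'
    set u : ℝ := Real.log (Cl' * lam) with hu
    set v : ℝ := Real.log Cm' with hv
    have hu1 : (p-1-α)*u - k₁*v = L₁ := by rw [hL₁]; linarith
    have hu2 : (p-1-k₂)*v - k₃*u = L₂ := by rw [hL₂]; linarith
    have h0 : (u - x) * ((p-1-α)*(p-1-k₂) - k₁*k₃) = 0 := by
      linear_combination (p-1-k₂)*hu1 - (p-1-k₂)*hx1 + k₁*hu2 - k₁*hx2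
    have h0' : (v - y) * ((p-1-α)*(p-1-k₂) - k₁*k₃) = 0 := by
      linear_combination k₃*hu1 - k₃*hx1 + (p-1-α)*hu2 - (p-1-α)*hx2
    have hux : u = x := by
      have := (mul_eq_zero.mp h0).resolve_right hDne; linarith
    have hvy : v = y := by
      have := (mul_eq_zero.mp h0').resolve_right hDne; linarith
    constructor
    · have : Cl' * lam = Real.exp x := by
        rw [← hux, hu, Real.exp_log (mul_pos hCl' hlam0)]
      have h2 : Cl' * lam = Cl * lam := by rw [this, hClA]
      exact mul_right_cancel₀ hlam0.ne' h2
    · rw [← Real.exp_log hCm', ← hv, hvy, hCmdef]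
  refine ⟨hlam1, hmu1, ⟨(Cl, Cm), ⟨hCl0, hCm0, hODE⟩, ?_⟩, ?_⟩
  · rintro ⟨Cl', Cm'⟩ ⟨h1, h2, h3⟩
    obtain ⟨e1, e2⟩ := hpairuniq Cl' Cm' h1 h2 h3
    simp [e1, e2]
  · refine ⟨(lam, mu, Cl, Cm), ⟨hlam0, hmu0, hCl0, hCm0, hODE⟩, ?_⟩
    rintro ⟨l', m', Cl', Cm'⟩ ⟨h1, h2, h3, h4, h5⟩
    have h5' := h5
    rw [powerODE_iff' n hn1 p α c₁ c₂ m₁ m₂ k₁ k₂ k₃ l' m' Cl' Cm' hc₁ hc₂ h1 h2 h3 h4] at h5'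
    obtain ⟨_, he1', _, he2'⟩ := h5'
    obtain ⟨hle, hme⟩ := hsolve l' m' (by linear_combination he1') (by linear_combination he2')
    subst hle hme
    obtain ⟨e1, e2⟩ := hpairuniq Cl' Cm' h3 h4 h5
    simp [e1, e2]
end
end
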